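/- arXiv:1703.10773 — 4 statements merged into one kernel-verified Lean document; each statement's English description precedes it below -/
import Mathlib

section
/- For any linear map A on ℂ^k and any 1 ≤ p ≤ k, the operator norm of the induced map ∧^p A on the p-th exterior power of ℂ^k equals the product a₁(A)⋯a_p(A) of the p largest singular values of A. -/
open MeasureTheory Filter Topology
open scoped ComplexOrder Matrix InnerProductSpace ENNReal
noncomputable section

abbrev Mat (k : ℕ) := Matrix (Fin k) (Fin k) ℂ

/-- Index set for the standard orthonormal basis `e_{i₁} ∧ … ∧ e_{i_p}` of `∧^p ℂ^k`. -/
abbrev WedgeIdx (k p : ℕ) := {s : Finset (Fin k) // s.card = p}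

/-- The matrix of `∧^p A` in the (orthonormal, for the Gram-determinant inner product)
basis of decomposable standard vectors: its entries are the `p×p` minors of `A`. -/
def wedgeMap {k : ℕ} (p : ℕ) (A : Mat k) : Matrix (WedgeIdx k p) (WedgeIdx k p) ℂ :=
  Matrix.of fun q r =>
    (A.submatrix (fun i : Fin p => (q.1.orderIsoOfFin q.2 i : Fin k))
                 (fun j : Fin p => (r.1.orderIsoOfFin r.2 j : Fin k))).det

/-- The operator norm of `∧^p A` on the `p`-th exterior power, equipped with the
Gram-determinant inner product. -/
def wedgeNorm {k : ℕ} (p : ℕ) (A : Mat k) : ℝ :=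
  ‖Matrix.toEuclideanCLM (𝕜 := ℂ) (wedgeMap p A)‖

/-! ### Auxiliary development -/

namespace WedgeAux

variable {k p : ℕ}

/-- The increasing enumeration of a `p`-element subset of `Fin k`. -/
def emb (s : WedgeIdx k p) : Fin p → Fin k := fun i => (s.1.orderIsoOfFin s.2 i : Fin k)

lemma emb_injective (s : WedgeIdx k p) : Function.Injective (emb s) := fun i j h =>
  (s.1.orderIsoOfFin s.2).injective (Subtype.ext h)

lemma emb_mem (s : WedgeIdx k p) (i : Fin p) : emb s i ∈ s.1 := (s.1.orderIsoOfFin s.2 i).2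

lemma emb_strictMono (s : WedgeIdx k p) : StrictMono (emb s) := fun i j h => by
  exact (s.1.orderIsoOfFin s.2).strictMono h

lemma image_emb (s : WedgeIdx k p) : Finset.univ.image (emb s) = s.1 := by
  ext j
  simp only [Finset.mem_image, Finset.mem_univ, true_and]
  constructor
  · rintro ⟨i, rfl⟩; exact emb_mem s i
  · intro hj
    exact ⟨(s.1.orderIsoOfFin s.2).symm ⟨j, hj⟩, by
      simp only [emb, OrderIso.apply_symm_apply]⟩

lemma wedgeMap_apply (A : Mat k) (q r : WedgeIdx k p) :
    wedgeMap p A q r = (A.submatrix (emb q) (emb r)).det := rfl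

lemma strictMono_val_le {g : Fin p → ℕ} (hg : StrictMono g) (i : Fin p) : (i : ℕ) ≤ g i := by
  have H : ∀ n, ∀ i : Fin p, (i : ℕ) = n → n ≤ g i := by
    intro n
    induction n with
    | zero => intro i _; exact Nat.zero_le _
    | succ m ih =>
      intro i hi
      have hip : (i : ℕ) < p := i.2
      have hm : m < p := by omega
      have hj : (⟨m, hm⟩ : Fin p) < i := by
        rw [Fin.lt_def]; simp only []; omega
      have h1 := ih ⟨m, hm⟩ rfl
      have h2 := hg hj
      omega
  exact H _ i rfl


open Matrix in
lemma det_mul_expand (M : Matrix (Fin p) (Fin k) ℂ) (N : Matrix (Fin k) (Fin p) ℂ) :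
    (M * N).det = ∑ f : Fin p → Fin k,
      (M.submatrix id f).det * ∏ i, N (f i) i := by
  have h1 : (M * N).det
      = ∑ f : Fin p → Fin k, ∑ σ : Equiv.Perm (Fin p),
          ((Equiv.Perm.sign σ : ℤ) : ℂ) * ∏ i, (M (σ i) (f i) * N (f i) i) := by
    simp only [Matrix.det_apply', Matrix.mul_apply, Finset.prod_univ_sum, Finset.mul_sum,
      Fintype.piFinset_univ]
    rw [Finset.sum_comm]
  rw [h1]
  refine Finset.sum_congr rfl fun f _ => ?_
  rw [Matrix.det_apply', Finset.sum_mul]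
  refine Finset.sum_congr rfl fun σ _ => ?_
  rw [Finset.prod_mul_distrib]
  simp only [Matrix.submatrix_apply, id_eq]
  ring

open Matrix in
lemma cauchyBinet (M : Matrix (Fin p) (Fin k) ℂ) (N : Matrix (Fin k) (Fin p) ℂ) :
    (M * N).det = ∑ s : WedgeIdx k p,
      (M.submatrix id (emb s)).det * (N.submatrix (emb s) id).det := by
  classical
  rw [det_mul_expand]
  set G : (Fin p → Fin k) → ℂ := fun f => (M.submatrix id f).det * ∏ i, N (f i) i with hG
  have hzero : ∀ f : Fin p → Fin k, ¬ Function.Injective f → G f = 0 := by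
    intro f hf
    obtain ⟨i, j, hij, hne⟩ : ∃ i j, f i = f j ∧ i ≠ j := by
      simp only [Function.Injective, not_forall] at hf
      obtain ⟨i, j, h1, h2⟩ := hf
      exact ⟨i, j, h1, h2⟩
    show (M.submatrix id f).det * ∏ i, N (f i) i = 0
    rw [Matrix.det_zero_of_column_eq hne (fun x => by simp [Matrix.submatrix_apply, hij]),
      zero_mul]
  have hsub := Finset.sum_subset
    (Finset.filter_subset (fun f : Fin p → Fin k => Function.Injective f) Finset.univ)
    (fun f _ hf => hzero f (by simpa using hf))
  rw [← hsub]
  have hbij : ∑ f ∈ Finset.univ.filter (fun f : Fin p → Fin k => Function.Injective f), G f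
      = ∑ x : WedgeIdx k p × Equiv.Perm (Fin p), G (emb x.1 ∘ x.2) := by
    refine (Finset.sum_bij (fun x _ => emb x.1 ∘ x.2) ?_ ?_ ?_ ?_).symm
    · intro x _
      simp only [Finset.mem_filter, Finset.mem_univ, true_and]
      exact (emb_injective x.1).comp x.2.injective
    · rintro ⟨s₁, σ₁⟩ _ ⟨s₂, σ₂⟩ _ h
      replace h : emb s₁ ∘ ⇑σ₁ = emb s₂ ∘ ⇑σ₂ := h
      have himg : s₁.1 = s₂.1 := by
        have e1 : Finset.univ.image (emb s₁ ∘ σ₁) = s₁.1 := by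
          rw [← Finset.image_image, Finset.image_univ_equiv, image_emb]
        have e2 : Finset.univ.image (emb s₂ ∘ σ₂) = s₂.1 := by
          rw [← Finset.image_image, Finset.image_univ_equiv, image_emb]
        rw [← e1, ← e2, h]
      
      have hs : s₁ = s₂ := Subtype.ext himg
      subst hs
      have hσ : σ₁ = σ₂ := by
        ext i
        exact congrArg Fin.val (emb_injective s₁ (congrFun h i))
      
      rw [hσ]
    · intro f hf
      have hfi : Function.Injective f := by simpa using hf
      have hcard : (Finset.univ.image f).card = p := by
        rw [Finset.card_image_of_injective _ hfi, Finset.card_univ, Fintype.card_fin]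
      set s : WedgeIdx k p := ⟨Finset.univ.image f, hcard⟩ with hsdef
      have hmem : ∀ i, f i ∈ s.1 := fun i => Finset.mem_image_of_mem f (Finset.mem_univ i)
      set τ : Fin p → Fin p := fun i => (s.1.orderIsoOfFin s.2).symm ⟨f i, hmem i⟩ with hτ
      have hτinj : Function.Injective τ := by
        intro i j hij
        have := (s.1.orderIsoOfFin s.2).symm.injective hij
        exact hfi (congrArg Subtype.val this)
      have hτbij : Function.Bijective τ := (Finite.injective_iff_bijective).mp hτinj
      refine ⟨⟨s, Equiv.ofBijective τ hτbij⟩, Finset.mem_univ _, ?_⟩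
      funext i
      show emb s (τ i) = f i
      simp only [emb, hτ, OrderIso.apply_symm_apply]
    · intro x _; rfl
  rw [hbij, Fintype.sum_prod_type]
  refine Finset.sum_congr rfl fun s _ => ?_
  have hperm : ∀ σ : Equiv.Perm (Fin p), G (emb s ∘ σ)
      = ((Equiv.Perm.sign σ : ℤ) : ℂ) * (M.submatrix id (emb s)).det
          * ∏ i, (N.submatrix (emb s) id) (σ i) i := by
    intro σ
    show (M.submatrix id (emb s ∘ ⇑σ)).det * ∏ i, N ((emb s ∘ ⇑σ) i) i = _
    have e1 : M.submatrix id (emb s ∘ σ) = (M.submatrix id (emb s)).submatrix id σ := by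
      rw [Matrix.submatrix_submatrix]; rfl
    rw [e1, Matrix.det_permute' σ]
    simp only [Matrix.submatrix_apply, id_eq, Function.comp_apply]
    try ring
  calc ∑ σ : Equiv.Perm (Fin p), G (emb s ∘ σ)
      = ∑ σ : Equiv.Perm (Fin p), (M.submatrix id (emb s)).det
          * (((Equiv.Perm.sign σ : ℤ) : ℂ) * ∏ i, (N.submatrix (emb s) id) (σ i) i) := by
        refine Finset.sum_congr rfl fun σ _ => ?_
        rw [hperm σ]; ring
    _ = (M.submatrix id (emb s)).det * (N.submatrix (emb s) id).det := by
        rw [← Finset.mul_sum]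
        congr 1
        exact (Matrix.det_apply' _).symm


open Matrix in
lemma wedgeMap_mul (A B : Mat k) :
    wedgeMap p (A * B) = wedgeMap p A * wedgeMap p B := by
  ext q r
  rw [Matrix.mul_apply]
  rw [wedgeMap_apply]
  have e1 : (A * B).submatrix (emb q) (emb r)
      = (A.submatrix (emb q) id) * (B.submatrix id (emb r)) := by
    ext i j
    simp [Matrix.mul_apply, Matrix.submatrix_apply]
  rw [e1, cauchyBinet]
  refine Finset.sum_congr rfl fun s _ => ?_
  rw [Matrix.submatrix_submatrix, Matrix.submatrix_submatrix]
  simp only [Function.comp_id, Function.id_comp]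
  rfl

open Matrix in
lemma wedgeMap_conjTranspose (A : Mat k) :
    wedgeMap p Aᴴ = (wedgeMap p A)ᴴ := by
  ext q r
  rw [wedgeMap_apply, Matrix.conjTranspose_apply, wedgeMap_apply]
  rw [← Matrix.conjTranspose_submatrix, Matrix.det_conjTranspose]

open Matrix in
lemma wedgeMap_diagonal (d : Fin k → ℂ) :
    wedgeMap p (Matrix.diagonal d)
      = Matrix.diagonal (fun s : WedgeIdx k p => ∏ i ∈ s.1, d i) := by
  ext q r
  by_cases h : q = r
  · subst h
    rw [wedgeMap_apply, Matrix.diagonal_apply_eq]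
    have e1 : (Matrix.diagonal d).submatrix (emb q) (emb q)
        = Matrix.diagonal (fun i => d (emb q i)) := by
      ext i j
      by_cases hij : i = j
      · subst hij; simp [Matrix.submatrix_apply]
      · rw [Matrix.submatrix_apply,
          Matrix.diagonal_apply_ne _ (fun hc => hij (emb_injective q hc)),
          Matrix.diagonal_apply_ne _ hij]
    rw [e1, Matrix.det_diagonal]
    rw [← Finset.prod_coe_sort q.1 d]
    exact Equiv.prod_comp (q.1.orderIsoOfFin q.2).toEquiv
      (fun x : {x // x ∈ q.1} => d x)
  · rw [wedgeMap_apply, Matrix.diagonal_apply_ne _ h]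
    have hne : q.1 ≠ r.1 := fun hc => h (Subtype.ext hc)
    obtain ⟨x, hxq, hxr⟩ : ∃ x, x ∈ q.1 ∧ x ∉ r.1 := by
      by_contra hc
      push_neg at hc
      exact hne (Finset.eq_of_subset_of_card_le hc (by rw [q.2, r.2]))
    apply Matrix.det_eq_zero_of_row_eq_zero ((q.1.orderIsoOfFin q.2).symm ⟨x, hxq⟩)
    intro j
    rw [Matrix.submatrix_apply]
    apply Matrix.diagonal_apply_ne
    intro hc
    apply hxr
    have : emb q ((q.1.orderIsoOfFin q.2).symm ⟨x, hxq⟩) = x := by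
      simp [emb, OrderIso.apply_symm_apply]
    rw [this] at hc
    exact hc ▸ emb_mem r j

open Matrix in
lemma wedgeMap_one : wedgeMap p (1 : Mat k) = 1 := by
  rw [← Matrix.diagonal_one, wedgeMap_diagonal]
  simp

open Matrix in
lemma wedgeMap_mem_unitary {U : Mat k} (hU : U ∈ Matrix.unitaryGroup (Fin k) ℂ) :
    wedgeMap p U ∈ unitary (Matrix (WedgeIdx k p) (WedgeIdx k p) ℂ) := by
  have h1 : star U * U = 1 := Matrix.mem_unitaryGroup_iff'.mp hU
  have h2 : U * star U = 1 := Matrix.mem_unitaryGroup_iff.mp hU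
  constructor
  · rw [Matrix.star_eq_conjTranspose, ← wedgeMap_conjTranspose, ← wedgeMap_mul,
      ← Matrix.star_eq_conjTranspose, h1, wedgeMap_one]
  · rw [Matrix.star_eq_conjTranspose, ← wedgeMap_conjTranspose, ← wedgeMap_mul,
      ← Matrix.star_eq_conjTranspose, h2, wedgeMap_one]


open scoped Matrix.Norms.L2Operator in
open Matrix in
lemma l2_opNorm_diagonal {n : Type*} [Fintype n] [DecidableEq n] [Nonempty n] (c : n → ℂ) :
    ‖Matrix.toEuclideanCLM (𝕜 := ℂ) (Matrix.diagonal c)‖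
      = Finset.univ.sup' Finset.univ_nonempty fun i => ‖c i‖ := by
  set T := Matrix.toEuclideanCLM (𝕜 := ℂ) (Matrix.diagonal c) with hT
  set C : ℝ := Finset.univ.sup' Finset.univ_nonempty fun i => ‖c i‖ with hC
  have happ : ∀ (x : EuclideanSpace ℂ n) (i : n), T x i = c i * x i := by
    intro x i
    have h0 := Matrix.ofLp_toEuclideanCLM (𝕜 := ℂ) (Matrix.diagonal c) x
    have : T x i = Matrix.toLin' (Matrix.diagonal c) (WithLp.equiv 2 _ x) i := by
      exact congrFun h0 i
    rw [this, Matrix.toLin'_apply, Matrix.mulVec_diagonal]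
    rfl
  have hCle : ∀ i, ‖c i‖ ≤ C := fun i => Finset.le_sup' (fun j => ‖c j‖) (Finset.mem_univ i)
  have hC0 : 0 ≤ C := le_trans (norm_nonneg _) (hCle (Classical.arbitrary n))
  refine le_antisymm ?_ ?_
  · refine ContinuousLinearMap.opNorm_le_bound _ hC0 fun x => ?_
    have h2 : ‖T x‖ ^ 2 ≤ (C * ‖x‖) ^ 2 := by
      rw [EuclideanSpace.norm_eq, Real.sq_sqrt (by positivity)]
      have hterm : ∀ i : n, ‖T x i‖ ^ 2 ≤ C ^ 2 * ‖x i‖ ^ 2 := by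
        intro i
        rw [happ, norm_mul, mul_pow]
        exact mul_le_mul_of_nonneg_right
          (pow_le_pow_left₀ (norm_nonneg _) (hCle i) 2) (by positivity)
      calc ∑ i : n, ‖T x i‖ ^ 2 ≤ ∑ i : n, C ^ 2 * ‖x i‖ ^ 2 :=
            Finset.sum_le_sum fun i _ => hterm i
        _ = C ^ 2 * ∑ i : n, ‖x i‖ ^ 2 := by rw [Finset.mul_sum]
        _ = (C * ‖x‖) ^ 2 := by
            rw [EuclideanSpace.norm_eq, mul_pow, Real.sq_sqrt (by positivity)]
    exact (pow_le_pow_iff_left₀ (norm_nonneg _) (by positivity) two_ne_zero).mp h2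
  · refine Finset.sup'_le _ _ fun i _ => ?_
    have h1 : T (EuclideanSpace.single i 1) = EuclideanSpace.single i (c i) := by
      refine PiLp.ext fun j => ?_
      rw [happ]
      rw [EuclideanSpace.single_apply, EuclideanSpace.single_apply]
      by_cases hji : j = i
      · subst hji; simp
      · simp [hji]
    calc ‖c i‖ = ‖T (EuclideanSpace.single i 1)‖ := by
          rw [h1, EuclideanSpace.norm_single]
      _ ≤ ‖T‖ * ‖EuclideanSpace.single i (1 : ℂ)‖ := T.le_opNorm _
      _ = ‖T‖ := by rw [EuclideanSpace.norm_single, norm_one, mul_one]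

lemma prod_subset_le (hpk : p ≤ k) (ν : Fin k → ℝ) (hν : Antitone ν) (h0 : ∀ i, 0 ≤ ν i)
    (t : Finset (Fin k)) (ht : t.card = p) :
    ∏ j ∈ t, ν j ≤ ∏ i : Fin p, ν (Fin.castLE hpk i) := by
  set s : WedgeIdx k p := ⟨t, ht⟩ with hs
  have e1 : ∏ j ∈ t, ν j = ∏ i : Fin p, ν (emb s i) := by
    rw [← Finset.prod_coe_sort t ν]
    exact (Equiv.prod_comp (t.orderIsoOfFin ht).toEquiv
      (fun x : {x // x ∈ t} => ν x)).symm
  rw [e1]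
  refine Finset.prod_le_prod (fun i _ => h0 _) fun i _ => ?_
  refine hν ?_
  have := strictMono_val_le (g := fun i => (emb s i : ℕ))
    (fun a b hab => by exact_mod_cast emb_strictMono s hab) i
  exact Fin.le_def.mpr (by simpa using this)

end WedgeAux

open WedgeAux in
open scoped Matrix.Norms.L2Operator in
/-- The operator norm of `∧^p A` equals the product `a₁(A)⋯a_p(A)` of the `p` largest singular
values of `A`, i.e. of the square roots of the eigenvalues of `A*A` arranged in
decreasing order. -/
theorem stmt2 (k : ℕ) (A : Mat k) :
    ∃ a : Fin k → ℝ, Antitone a ∧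
      (∃ σ : Equiv.Perm (Fin k),
        ∀ i, a i = Real.sqrt ((Matrix.isHermitian_conjTranspose_mul_self A).eigenvalues (σ i))) ∧
      ∀ (p : ℕ) (hp1 : 1 ≤ p) (hpk : p ≤ k),
        wedgeNorm p A = ∏ i : Fin p, a (Fin.castLE hpk i) := by
  classical
  set hA := Matrix.isHermitian_conjTranspose_mul_self A with hAdef
  set μ : Fin k → ℝ := hA.eigenvalues with hμdef
  have hμ0 : ∀ i, 0 ≤ μ i := fun i =>
    Matrix.eigenvalues_conjTranspose_mul_self_nonneg A i
  set τ : Equiv.Perm (Fin k) := Tuple.sort μ with hτdef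
  set σ : Equiv.Perm (Fin k) := Fin.revPerm.trans τ with hσdef
  set ν : Fin k → ℝ := fun i => μ (σ i) with hνdef
  have hν0 : ∀ i, 0 ≤ ν i := fun i => hμ0 _
  have hmono : Monotone (μ ∘ ⇑τ) := Tuple.monotone_sort μ
  have hanti : Antitone ν := by
    intro i j hij
    have h1 : j.rev ≤ i.rev := Fin.rev_le_rev.mpr hij
    exact hmono h1
  refine ⟨fun i => Real.sqrt (ν i), ?_, ⟨σ, fun i => rfl⟩, ?_⟩
  · exact fun i j hij => Real.sqrt_le_sqrt (hanti hij)
  intro p hp1 hpk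
  haveI hne : Nonempty (WedgeIdx k p) :=
    ⟨⟨Finset.univ.image (Fin.castLE hpk), by
        rw [Finset.card_image_of_injective _ (Fin.castLE_injective hpk),
          Finset.card_univ, Fintype.card_fin]⟩⟩
  haveI : Nontrivial (Matrix (WedgeIdx k p) (WedgeIdx k p) ℂ) := by
    obtain ⟨q⟩ := hne
    refine nontrivial_of_ne 0 1 fun hc => ?_
    have h01 := congrFun (congrFun hc q) q
    simp [Matrix.one_apply] at h01
  set U : Mat k := (hA.eigenvectorUnitary : Mat k) with hUdef
  have hUmem : U ∈ Matrix.unitaryGroup (Fin k) ℂ := (hA.eigenvectorUnitary).2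
  have hWU := wedgeMap_mem_unitary (p := p) hUmem
  have hstar : wedgeMap p (star U) = star (wedgeMap p U) := by
    rw [Matrix.star_eq_conjTranspose, Matrix.star_eq_conjTranspose, wedgeMap_conjTranspose]
  have hnorm : ∀ s : WedgeIdx k p,
      ‖∏ i ∈ s.1, ((RCLike.ofReal ∘ μ) i : ℂ)‖ = ∏ i ∈ s.1, μ i := by
    intro s
    rw [norm_prod]
    refine Finset.prod_congr rfl fun i _ => ?_
    simp only [Function.comp_apply, RCLike.norm_ofReal]
    exact abs_of_nonneg (hμ0 i)
  have key2 : wedgeNorm p A ^ 2 = ∏ i : Fin p, ν (Fin.castLE hpk i) := by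
    show ‖Matrix.toEuclideanCLM (𝕜 := ℂ) (wedgeMap p A)‖ ^ 2 = _
    rw [← Matrix.cstar_norm_def, sq, ← Matrix.l2_opNorm_conjTranspose_mul_self]
    rw [← wedgeMap_conjTranspose, ← wedgeMap_mul]
    have hspec := hA.spectral_theorem
    rw [Unitary.conjStarAlgAut_apply] at hspec
    rw [hspec, wedgeMap_mul, wedgeMap_mul, hstar, ← hUdef, ← hμdef, mul_assoc,
      CStarRing.norm_mem_unitary_mul _ hWU,
      CStarRing.norm_mul_mem_unitary _ (Unitary.star_mem hWU),
      wedgeMap_diagonal, Matrix.cstar_norm_def, l2_opNorm_diagonal]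
    apply le_antisymm
    · refine Finset.sup'_le _
        (fun s : WedgeIdx k p => ‖∏ i ∈ s.1, ((RCLike.ofReal ∘ μ) i : ℂ)‖) fun s _ => ?_
      show ‖∏ i ∈ s.1, ((RCLike.ofReal ∘ μ) i : ℂ)‖ ≤ ∏ i : Fin p, ν (Fin.castLE hpk i)
      rw [hnorm s]
      have himg : ∏ i ∈ s.1, μ i = ∏ j ∈ s.1.image ⇑σ.symm, ν j := by
        rw [Finset.prod_image (fun a _ b _ h => σ.symm.injective h)]
        refine Finset.prod_congr rfl fun i _ => ?_
        simp [hνdef]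
      rw [himg]
      exact prod_subset_le hpk ν hanti hν0 _ (by
        rw [Finset.card_image_of_injective _ σ.symm.injective, s.2])
    · set s₀ : WedgeIdx k p := ⟨Finset.univ.image (fun i : Fin p => σ (Fin.castLE hpk i)), by
        rw [Finset.card_image_of_injective _
            (fun a b h => Fin.castLE_injective hpk (σ.injective h)),
          Finset.card_univ, Fintype.card_fin]⟩ with hs₀def
      have hle := Finset.le_sup'
        (fun s : WedgeIdx k p => ‖∏ i ∈ s.1, ((RCLike.ofReal ∘ μ) i : ℂ)‖) (Finset.mem_univ s₀)
      refine le_trans (le_of_eq ?_) hle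
      show ∏ i : Fin p, ν (Fin.castLE hpk i) = ‖∏ i ∈ s₀.1, ((RCLike.ofReal ∘ μ) i : ℂ)‖
      rw [hnorm s₀]
      rw [show s₀.1 = Finset.univ.image (fun i : Fin p => σ (Fin.castLE hpk i)) from rfl]
      rw [Finset.prod_image (fun a _ b _ h => Fin.castLE_injective hpk (σ.injective h))]
  have hprod : (∏ i : Fin p, Real.sqrt (ν (Fin.castLE hpk i))) ^ 2
      = ∏ i : Fin p, ν (Fin.castLE hpk i) := by
    rw [← Finset.prod_pow]
    exact Finset.prod_congr rfl fun i _ => Real.sq_sqrt (hν0 _)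
  exact (sq_eq_sq₀ (norm_nonneg _) (Finset.prod_nonneg fun i _ => Real.sqrt_nonneg _)).mp
    (key2.trans hprod.symm)
end
end

section
/- Suppose ν is a probability measure on P(ℂ^k) invariant under the Markov kernel Π(x̂, S) = ∫ 1_S(v·x̂) ‖vx‖² dμ(v), where ∫ v*v dμ(v) = Id. Then the density matrix ρ_ν := ∫ π_{x̂} dν(x̂) (the barycenter of rank-one projections) is a fixed point of the quantum channel φ(ρ) = ∫ v ρ v* dμ(v), i.e., φ(ρ_ν) = ρ_ν. -/
open MeasureTheory Filter Topology
open scoped ComplexOrder Matrix InnerProductSpace ENNReal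
noncomputable section
attribute [local instance] Classical.propDecidable

abbrev Evec (k : ℕ) := EuclideanSpace ℂ (Fin k)

instance (k : ℕ) : MeasurableSpace (Mat k) :=
  inferInstanceAs (MeasurableSpace (Fin k → Fin k → ℂ))
instance (k : ℕ) : MeasurableSpace (Evec k) := borel _
instance (k : ℕ) : BorelSpace (Evec k) := ⟨rfl⟩
instance (k : ℕ) : MeasurableSpace (Projectivization ℂ (Evec k)) :=
  inferInstanceAs (MeasurableSpace (Quotient (projectivizationSetoid ℂ (Evec k))))

/-- The unit-norm canonical representative of a point of projective space. -/
def unitRep {k : ℕ} (x : Projectivization ℂ (Evec k)) : Evec k :=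
  (‖x.rep‖⁻¹ : ℂ) • x.rep

/-- Action of a matrix on a vector of `ℂ^k`. -/
def matVec {k : ℕ} (v : Mat k) (x : Evec k) : Evec k := Matrix.toEuclideanLin v x

/-- The integrand `1_S(v·x̂) ‖v x‖²`, understood as `0` when `v x = 0`. -/
def kerInt {k : ℕ} (v : Mat k) (x : Projectivization ℂ (Evec k))
    (S : Set (Projectivization ℂ (Evec k))) : ℝ :=
  if h : matVec v (unitRep x) = 0 then 0
  else S.indicator (fun _ => ‖matVec v (unitRep x)‖ ^ 2) (Projectivization.mk ℂ _ h)

/-- The transition kernel `Π(x̂, S) = ∫ 1_S(v·x̂) ‖v x‖² dμ(v)`. -/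
def PiKer {k : ℕ} (μ : Measure (Mat k)) (x : Projectivization ℂ (Evec k))
    (S : Set (Projectivization ℂ (Evec k))) : ℝ :=
  ∫ v, kerInt v x S ∂μ

/-- The orthogonal projection `π_{x̂}` onto the line `x̂ ⊂ ℂ^k`, as a matrix. -/
def projMat {k : ℕ} (x : Projectivization ℂ (Evec k)) : Mat k :=
  Matrix.of fun i j => unitRep x i * (starRingEnd ℂ) (unitRep x j)

set_option maxHeartbeats 1000000
set_option synthInstance.maxHeartbeats 400000
section Aux
variable {k : ℕ}

instance (k : ℕ) : BorelSpace (Mat k) := inferInstanceAs (BorelSpace (Fin k → Fin k → ℂ))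

lemma norm_unitRep (x : Projectivization ℂ (Evec k)) : ‖unitRep x‖ = 1 := by
  have h : ‖x.rep‖ ≠ 0 := norm_ne_zero_iff.2 x.rep_nonzero
  rw [unitRep, norm_smul]
  simp only [Complex.norm_real, norm_inv, norm_norm]
  field_simp

lemma matVec_apply (v : Mat k) (u : Evec k) (i : Fin k) :
    matVec v u i = ∑ a, v i a * u a := by
  simp [matVec, Matrix.toEuclideanLin_apply, Matrix.mulVec, dotProduct]

lemma matVec_eq (v : Mat k) (u : Evec k) :
    matVec v u = Matrix.toEuclideanCLM (𝕜 := ℂ) v u := by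
  rw [matVec, ← Matrix.coe_toEuclideanCLM_eq_toEuclideanLin]
  rfl

lemma norm_matVec_le (v : Mat k) (u : Evec k) :
    ‖matVec v u‖ ≤ ‖Matrix.toEuclideanCLM (𝕜 := ℂ) v‖ * ‖u‖ := by
  rw [matVec_eq]; exact (Matrix.toEuclideanCLM (𝕜 := ℂ) v).le_opNorm u

lemma measurable_matVec (u : Evec k) : Measurable fun v : Mat k => matVec v u := by
  let L : Mat k →ₗ[ℂ] Evec k :=
    { toFun := fun v => matVec v u
      map_add' := by intro a b; simp [matVec, map_add]
      map_smul' := by intro c a; simp [matVec, _root_.map_smul] }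
  exact L.continuous_of_finiteDimensional.measurable

lemma coord_le (w : Evec k) (i : Fin k) : ‖w i‖ ≤ ‖w‖ := by
  rw [EuclideanSpace.norm_eq]
  calc ‖w i‖ = Real.sqrt (‖w i‖ ^ 2) := (Real.sqrt_sq (norm_nonneg _)).symm
  _ ≤ _ := Real.sqrt_le_sqrt (Finset.single_le_sum (fun a _ => sq_nonneg ‖w a‖) (Finset.mem_univ i))

lemma entry_le (v : Mat k) (i a : Fin k) :
    ‖v i a‖ ≤ ‖Matrix.toEuclideanCLM (𝕜 := ℂ) v‖ := by
  have h1 : v i a = matVec v (EuclideanSpace.single a 1) i := by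
    rw [matVec_apply]
    simp [EuclideanSpace.single_apply]
  rw [h1]
  calc ‖matVec v (EuclideanSpace.single a 1) i‖ ≤ ‖matVec v (EuclideanSpace.single a (1:ℂ))‖ :=
        coord_le _ _
  _ ≤ ‖Matrix.toEuclideanCLM (𝕜 := ℂ) v‖ * ‖EuclideanSpace.single a (1:ℂ)‖ := norm_matVec_le _ _
  _ = ‖Matrix.toEuclideanCLM (𝕜 := ℂ) v‖ := by rw [EuclideanSpace.norm_single]; simp

/-- Complex extension to `ℂ^k` of a function on projective space, weighted by `‖w‖²`. -/
def cext (g : Projectivization ℂ (Evec k) → ℂ) (w : Evec k) : ℂ :=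
  if h : w = 0 then 0 else g (Projectivization.mk ℂ w h) * (‖w‖ : ℂ) ^ 2

/-- Real version. -/
def rext (g : Projectivization ℂ (Evec k) → ℝ) (w : Evec k) : ℝ :=
  if h : w = 0 then 0 else g (Projectivization.mk ℂ w h) * ‖w‖ ^ 2

lemma measurable_mkP :
    Measurable fun p : {w : Evec k // w ≠ 0} => Projectivization.mk ℂ p.1 p.2 :=
  measurable_quotient_mk''

lemma measurable_cext {g : Projectivization ℂ (Evec k) → ℂ} (hg : Measurable g) :
    Measurable (cext g) := by
  have hs : MeasurableSet {w : Evec k | w = 0} := measurableSet_eq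
  have hm : Measurable fun p : ({w : Evec k | w = 0}ᶜ : Set (Evec k)) =>
      g (Projectivization.mk ℂ p.1 p.2) * (‖(p.1 : Evec k)‖ : ℂ) ^ 2 := by
    apply Measurable.mul
    · exact hg.comp measurable_mkP
    · exact ((Complex.measurable_ofReal.comp measurable_subtype_coe.norm).pow_const 2)
  exact Measurable.dite measurable_const hm hs

lemma measurable_rext {g : Projectivization ℂ (Evec k) → ℝ} (hg : Measurable g) :
    Measurable (rext g) := by
  have hs : MeasurableSet {w : Evec k | w = 0} := measurableSet_eq
  have hm : Measurable fun p : ({w : Evec k | w = 0}ᶜ : Set (Evec k)) =>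
      g (Projectivization.mk ℂ p.1 p.2) * ‖(p.1 : Evec k)‖ ^ 2 := by
    apply Measurable.mul
    · exact hg.comp measurable_mkP
    · exact measurable_subtype_coe.norm.pow_const 2
  exact Measurable.dite measurable_const hm hs

lemma norm_cext_le {g : Projectivization ℂ (Evec k) → ℂ} {C : ℝ}
    (hC : ∀ y, ‖g y‖ ≤ C) (w : Evec k) : ‖cext g w‖ ≤ C * ‖w‖ ^ 2 := by
  unfold cext
  split_ifs with h
  · simp [h]
  · rw [norm_mul, norm_pow, Complex.norm_real, Real.norm_eq_abs, abs_of_nonneg (norm_nonneg w)]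
    exact mul_le_mul_of_nonneg_right (hC _) (by positivity)

lemma norm_rext_le {g : Projectivization ℂ (Evec k) → ℝ} {C : ℝ}
    (hC : ∀ y, |g y| ≤ C) (w : Evec k) : |rext g w| ≤ C * ‖w‖ ^ 2 := by
  unfold rext
  split_ifs with h
  · simp [h]
  · rw [abs_mul, abs_of_nonneg (a := ‖w‖ ^ 2) (by positivity)]
    exact mul_le_mul_of_nonneg_right (hC _) (by positivity)

lemma kerInt_eq (v : Mat k) (x : Projectivization ℂ (Evec k))
    (S : Set (Projectivization ℂ (Evec k))) :
    kerInt v x S = rext (S.indicator fun _ => (1 : ℝ)) (matVec v (unitRep x)) := by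
  unfold kerInt rext
  split_ifs with h
  · rfl
  · by_cases hp : Projectivization.mk ℂ _ h ∈ S
    · simp [Set.indicator_of_mem hp]
    · simp [Set.indicator_of_notMem hp]

lemma projMat_mk {w : Evec k} (h : w ≠ 0) (i j : Fin k) :
    projMat (Projectivization.mk ℂ w h) i j
      = w i * (starRingEnd ℂ) (w j) / (‖w‖ : ℂ) ^ 2 := by
  obtain ⟨a, ha⟩ := (Projectivization.mk_eq_mk_iff' ℂ _ _
      (Projectivization.rep_nonzero _) h).1 (Projectivization.mk_rep (Projectivization.mk ℂ w h))
  have ha0 : a ≠ 0 := by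
    intro h0
    exact Projectivization.rep_nonzero (Projectivization.mk ℂ w h) (by rw [← ha, h0, zero_smul])
  have hw0 : ‖w‖ ≠ 0 := norm_ne_zero_iff.2 h
  have hA0 : ‖a‖ ≠ 0 := norm_ne_zero_iff.2 ha0
  have hrep : (Projectivization.mk ℂ w h).rep = a • w := ha.symm
  have hnorm : ‖(Projectivization.mk ℂ w h).rep‖ = ‖a‖ * ‖w‖ := by rw [hrep, norm_smul]
  have hentry : ∀ l, unitRep (Projectivization.mk ℂ w h) l
      = (((‖a‖ * ‖w‖)⁻¹ : ℝ) : ℂ) * (a * w l) := by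
    intro l
    rw [unitRep, hnorm, hrep]
    simp [PiLp.smul_apply, smul_eq_mul]
  have hmc : a * (starRingEnd ℂ) a = ((‖a‖ ^ 2 : ℝ) : ℂ) := by
    rw [Complex.mul_conj, Complex.normSq_eq_norm_sq]
  simp only [projMat, Matrix.of_apply]
  rw [hentry i, hentry j, map_mul, map_mul, Complex.conj_ofReal]
  have hre : (((‖a‖ * ‖w‖)⁻¹ : ℝ) : ℂ) * (a * w i) *
      ((((‖a‖ * ‖w‖)⁻¹ : ℝ) : ℂ) * ((starRingEnd ℂ) a * (starRingEnd ℂ) (w j)))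
      = ((((‖a‖ * ‖w‖)⁻¹ : ℝ) : ℂ)) ^ 2 * (a * (starRingEnd ℂ) a) * (w i * (starRingEnd ℂ) (w j)) := by
    ring
  rw [hre, hmc]
  have h1 : ((‖a‖ : ℝ) : ℂ) ≠ 0 := by exact_mod_cast hA0
  have h2 : ((‖w‖ : ℝ) : ℂ) ≠ 0 := by exact_mod_cast hw0
  push_cast
  field_simp

lemma norm_projMat_le (x : Projectivization ℂ (Evec k)) (i j : Fin k) : ‖projMat x i j‖ ≤ 1 := by
  have h1 := coord_le (unitRep x) i
  have h2 := coord_le (unitRep x) j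
  rw [norm_unitRep] at h1 h2
  calc ‖projMat x i j‖ = ‖unitRep x i‖ * ‖unitRep x j‖ := by
        simp [projMat, norm_mul, RCLike.norm_conj]
  _ ≤ 1 := by nlinarith [norm_nonneg (unitRep x i), norm_nonneg (unitRep x j)]

lemma measurable_projMat (i j : Fin k) :
    Measurable fun x : Projectivization ℂ (Evec k) => projMat x i j := by
  refine measurable_from_quotient.2 ?_
  have heq : ((fun x : Projectivization ℂ (Evec k) => projMat x i j) ∘ Quotient.mk'')
      = fun p : {w : Evec k // w ≠ 0} =>
          p.1 i * (starRingEnd ℂ) (p.1 j) / (‖(p.1 : Evec k)‖ : ℂ) ^ 2 := by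
    funext p
    exact projMat_mk p.2 i j
  refine (congrArg Measurable heq).mpr ?_
  have hcoord : ∀ l : Fin k, Measurable fun p : {w : Evec k // w ≠ 0} => (p.1 : Evec k) l := by
    intro l
    exact ((EuclideanSpace.proj (𝕜 := ℂ) l).continuous.measurable).comp measurable_subtype_coe
  apply Measurable.div
  · exact (hcoord i).mul (continuous_star.measurable.comp (hcoord j))
  · exact (Complex.measurable_ofReal.comp measurable_subtype_coe.norm).pow_const 2

lemma matVec_unit_le (v : Mat k) (x : Projectivization ℂ (Evec k)) :
    ‖matVec v (unitRep x)‖ ≤ ‖Matrix.toEuclideanCLM (𝕜 := ℂ) v‖ := by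
  have := norm_matVec_le v (unitRep x)
  rwa [norm_unitRep, mul_one] at this

lemma kerInt_integrable {μ : Measure (Mat k)}
    (hmom : Integrable (fun v => ‖Matrix.toEuclideanCLM (𝕜 := ℂ) (n := Fin k) v‖ ^ 2) μ)
    (x : Projectivization ℂ (Evec k)) {S : Set (Projectivization ℂ (Evec k))}
    (hS : MeasurableSet S) : Integrable (fun v => kerInt v x S) μ := by
  apply hmom.mono'
  · apply Measurable.aestronglyMeasurable
    simp_rw [kerInt_eq]
    exact (measurable_rext (measurable_const.indicator hS)).comp (measurable_matVec _)
  · refine ae_of_all _ fun v => ?_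
    rw [Real.norm_eq_abs, kerInt_eq]
    have h1 : ∀ y, |(S.indicator fun _ => (1 : ℝ)) y| ≤ 1 := fun y => by
      by_cases hy : y ∈ S <;> simp [hy]
    refine le_trans (norm_rext_le h1 _) ?_
    rw [one_mul]
    exact pow_le_pow_left₀ (norm_nonneg _) (matVec_unit_le v x) 2

lemma kerInt_compl (v : Mat k) (x : Projectivization ℂ (Evec k))
    (S : Set (Projectivization ℂ (Evec k))) :
    kerInt v x S + kerInt v x Sᶜ = kerInt v x Set.univ := by
  unfold kerInt
  split_ifs with h
  · simp
  · by_cases hp : Projectivization.mk ℂ _ h ∈ S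
    · rw [Set.indicator_of_mem hp, Set.indicator_of_notMem (by simpa using hp),
        Set.indicator_univ]
      simp
    · rw [Set.indicator_of_notMem hp, Set.indicator_of_mem (by simpa using hp),
        Set.indicator_univ]
      simp

lemma pik_integrable {μ : Measure (Mat k)}
    (hmom : Integrable (fun v => ‖Matrix.toEuclideanCLM (𝕜 := ℂ) (n := Fin k) v‖ ^ 2) μ)
    {ν : Measure (Projectivization ℂ (Evec k))} [IsProbabilityMeasure ν]
    (hinv : ∀ S : Set (Projectivization ℂ (Evec k)), MeasurableSet S →
      ∫ x, PiKer μ x S ∂ν = (ν S).toReal)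
    {S : Set (Projectivization ℂ (Evec k))} (hS : MeasurableSet S) :
    Integrable (fun x => PiKer μ x S) ν := by
  have main : ∀ T : Set (Projectivization ℂ (Evec k)), MeasurableSet T → ν T ≠ 0 →
      Integrable (fun x => PiKer μ x T) ν := by
    intro T hT hT0
    by_contra hni
    have h := hinv T hT
    rw [integral_undef hni] at h
    exact (ENNReal.toReal_ne_zero.2 ⟨hT0, measure_ne_top ν T⟩) h.symm
  by_cases h0 : ν S = 0
  · have hSc : ν Sᶜ ≠ 0 := by
      rw [measure_compl hS (measure_ne_top _ _), h0, measure_univ]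
      simp
    have h1 : Integrable (fun x => PiKer μ x Set.univ) ν :=
      main _ MeasurableSet.univ (by simp)
    have h2 : Integrable (fun x => PiKer μ x Sᶜ) ν := main _ hS.compl hSc
    have hpt : (fun x => PiKer μ x S)
        = fun x => PiKer μ x Set.univ - PiKer μ x Sᶜ := by
      funext x
      have i1 : Integrable (fun v => kerInt v x S) μ := kerInt_integrable hmom x hS
      have i2 : Integrable (fun v => kerInt v x Sᶜ) μ := kerInt_integrable hmom x hS.compl
      have huniv : PiKer μ x Set.univ = PiKer μ x S + PiKer μ x Sᶜ := by
        unfold PiKer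
        rw [← integral_add i1 i2]
        exact integral_congr_ae (ae_of_all _ fun v => (kerInt_compl v x S).symm)
      linarith
    rw [hpt]
    exact h1.sub h2
  · exact main S hS h0

/-- The inner integral `∫ g(v·x̂) ‖vx‖² dμ(v)` for a complex test function `g`. -/
def innerInt (μ : Measure (Mat k)) (g : Projectivization ℂ (Evec k) → ℂ)
    (x : Projectivization ℂ (Evec k)) : ℂ :=
  ∫ v, cext g (matVec v (unitRep x)) ∂μ

lemma wker_integrable {μ : Measure (Mat k)}
    (hmom : Integrable (fun v => ‖Matrix.toEuclideanCLM (𝕜 := ℂ) (n := Fin k) v‖ ^ 2) μ)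
    {g : Projectivization ℂ (Evec k) → ℂ} {C : ℝ}
    (hg : Measurable g) (hC : ∀ y, ‖g y‖ ≤ C) (hC0 : 0 ≤ C)
    (x : Projectivization ℂ (Evec k)) :
    Integrable (fun v => cext g (matVec v (unitRep x))) μ := by
  apply (hmom.const_mul C).mono'
  · exact ((measurable_cext hg).comp (measurable_matVec _)).aestronglyMeasurable
  · refine ae_of_all _ fun v => ?_
    refine le_trans (norm_cext_le hC _) ?_
    exact mul_le_mul_of_nonneg_left
      (pow_le_pow_left₀ (norm_nonneg _) (matVec_unit_le v x) 2) hC0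

lemma cext_indicator {S : Set (Projectivization ℂ (Evec k))} (c : ℂ) (w : Evec k) :
    cext (S.indicator fun _ => c) w
      = c * ((rext (S.indicator fun _ => (1 : ℝ)) w : ℝ) : ℂ) := by
  unfold cext rext
  split_ifs with h
  · simp
  · by_cases hp : Projectivization.mk ℂ w h ∈ S
    · rw [Set.indicator_of_mem hp, Set.indicator_of_mem hp]
      push_cast
      ring
    · rw [Set.indicator_of_notMem hp, Set.indicator_of_notMem hp]
      simp

lemma innerInt_indicator (μ : Measure (Mat k)) {S : Set (Projectivization ℂ (Evec k))}
    (hS : MeasurableSet S) (c : ℂ) (x : Projectivization ℂ (Evec k)) :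
    innerInt μ (S.indicator fun _ => c) x = c * ((PiKer μ x S : ℝ) : ℂ) := by
  unfold innerInt
  simp_rw [cext_indicator c, ← kerInt_eq]
  rw [integral_const_mul]
  congr 1
  exact integral_ofReal

lemma key_simple {μ : Measure (Mat k)}
    (hmom : Integrable (fun v => ‖Matrix.toEuclideanCLM (𝕜 := ℂ) (n := Fin k) v‖ ^ 2) μ)
    {ν : Measure (Projectivization ℂ (Evec k))} [IsProbabilityMeasure ν]
    (hinv : ∀ S : Set (Projectivization ℂ (Evec k)), MeasurableSet S →
      ∫ x, PiKer μ x S ∂ν = (ν S).toReal)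
    (s : SimpleFunc (Projectivization ℂ (Evec k)) ℂ) :
    Integrable (fun x => innerInt μ (⇑s) x) ν ∧
      ∫ x, innerInt μ (⇑s) x ∂ν = ∫ y, s y ∂ν := by
  induction s using MeasureTheory.SimpleFunc.induction with
  | @const c S hS =>
    have hcoe : ⇑(SimpleFunc.piecewise S hS (SimpleFunc.const _ c) (SimpleFunc.const _ 0))
        = S.indicator fun _ => c := by
      funext y
      by_cases hy : y ∈ S <;>
        simp [SimpleFunc.piecewise_apply, Set.indicator, hy]
    rw [hcoe]
    have hint : Integrable (fun x => PiKer μ x S) ν := pik_integrable hmom hinv hS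
    constructor
    · exact ((hint.ofReal).const_mul c).congr
        (ae_of_all _ fun x => (innerInt_indicator μ hS c x).symm)
    · calc ∫ x, innerInt μ (S.indicator fun _ => c) x ∂ν
          = ∫ x, c * ((PiKer μ x S : ℝ) : ℂ) ∂ν :=
            integral_congr_ae (ae_of_all _ fun x => innerInt_indicator μ hS c x)
      _ = c * ((∫ x, PiKer μ x S ∂ν : ℝ) : ℂ) := by
            rw [integral_const_mul]
            congr 1
            exact integral_ofReal
      _ = c * (((ν S).toReal : ℝ) : ℂ) := by rw [hinv S hS]
      _ = ∫ y, (S.indicator fun _ => c) y ∂ν := by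
            rw [integral_indicator_const c hS, Complex.real_smul]
            ring_nf
            rfl
  | @add f g hdisj ihf ihg =>
    obtain ⟨Cf, hCf⟩ := f.exists_forall_norm_le
    obtain ⟨Cg, hCg⟩ := g.exists_forall_norm_le
    have hCf' : ∀ y, ‖f y‖ ≤ max Cf 0 := fun y => le_trans (hCf y) (le_max_left _ _)
    have hCg' : ∀ y, ‖g y‖ ≤ max Cg 0 := fun y => le_trans (hCg y) (le_max_left _ _)
    have hif : ∀ x, Integrable (fun v => cext (⇑f) (matVec v (unitRep x))) μ :=
      fun x => wker_integrable hmom f.measurable hCf' (le_max_right _ _) x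
    have hig : ∀ x, Integrable (fun v => cext (⇑g) (matVec v (unitRep x))) μ :=
      fun x => wker_integrable hmom g.measurable hCg' (le_max_right _ _) x
    have hcadd : ∀ w, cext ⇑(f + g) w = cext ⇑f w + cext ⇑g w := by
      intro w
      unfold cext
      split_ifs with h
      · simp
      · rw [SimpleFunc.coe_add, Pi.add_apply]
        ring
    have hiadd : ∀ x, innerInt μ ⇑(f + g) x = innerInt μ ⇑f x + innerInt μ ⇑g x := by
      intro x
      unfold innerInt
      rw [← integral_add (hif x) (hig x)]
      exact integral_congr_ae (ae_of_all _ fun v => hcadd (matVec v (unitRep x)))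
    have hintf : Integrable (⇑f) ν :=
      (integrable_const (max Cf 0)).mono' f.stronglyMeasurable.aestronglyMeasurable
        (ae_of_all _ hCf')
    have hintg : Integrable (⇑g) ν :=
      (integrable_const (max Cg 0)).mono' g.stronglyMeasurable.aestronglyMeasurable
        (ae_of_all _ hCg')
    constructor
    · exact (ihf.1.add ihg.1).congr (ae_of_all _ fun x => (hiadd x).symm)
    · calc ∫ x, innerInt μ ⇑(f + g) x ∂ν
          = ∫ x, (innerInt μ ⇑f x + innerInt μ ⇑g x) ∂ν :=
            integral_congr_ae (ae_of_all _ fun x => hiadd x)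
      _ = (∫ x, innerInt μ ⇑f x ∂ν) + ∫ x, innerInt μ ⇑g x ∂ν := integral_add ihf.1 ihg.1
      _ = (∫ y, f y ∂ν) + ∫ y, g y ∂ν := by rw [ihf.2, ihg.2]
      _ = ∫ y, (f + g) y ∂ν := by
            rw [← integral_add hintf hintg]
            exact integral_congr_ae (ae_of_all _ fun y => by rw [SimpleFunc.coe_add, Pi.add_apply])

lemma key_meas {μ : Measure (Mat k)}
    (hmom : Integrable (fun v => ‖Matrix.toEuclideanCLM (𝕜 := ℂ) (n := Fin k) v‖ ^ 2) μ)
    {ν : Measure (Projectivization ℂ (Evec k))} [IsProbabilityMeasure ν]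
    (hinv : ∀ S : Set (Projectivization ℂ (Evec k)), MeasurableSet S →
      ∫ x, PiKer μ x S ∂ν = (ν S).toReal)
    {g : Projectivization ℂ (Evec k) → ℂ} (hg : Measurable g) (hb : ∀ y, ‖g y‖ ≤ 1) :
    ∫ x, innerInt μ g x ∂ν = ∫ y, g y ∂ν := by
  set s : ℕ → SimpleFunc (Projectivization ℂ (Evec k)) ℂ :=
    fun n => SimpleFunc.approxOn g hg Set.univ 0 (Set.mem_univ 0) n with hs
  have hsb : ∀ n y, ‖s n y‖ ≤ 2 := fun n y =>
    le_trans (SimpleFunc.norm_approxOn_zero_le hg _ y n) (by linarith [hb y])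
  have hpt : ∀ y, Tendsto (fun n => s n y) atTop (𝓝 (g y)) := fun y =>
    SimpleFunc.tendsto_approxOn hg _ (by simp)
  have hwm : ∀ n x, Integrable (fun v => cext (⇑(s n)) (matVec v (unitRep x))) μ :=
    fun n x => wker_integrable hmom (s n).measurable (hsb n) (by norm_num) x
  have ha : ∀ x, Tendsto (fun n => innerInt μ (⇑(s n)) x) atTop (𝓝 (innerInt μ g x)) := by
    intro x
    apply tendsto_integral_of_dominated_convergence
      (fun v : Mat k => 2 * ‖Matrix.toEuclideanCLM (𝕜 := ℂ) v‖ ^ 2)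
    · exact fun n => (hwm n x).aestronglyMeasurable
    · exact hmom.const_mul 2
    · intro n
      refine ae_of_all _ fun v => ?_
      refine le_trans (norm_cext_le (hsb n) _) ?_
      exact mul_le_mul_of_nonneg_left
        (pow_le_pow_left₀ (norm_nonneg _) (matVec_unit_le v x) 2) (by norm_num)
    · refine ae_of_all _ fun v => ?_
      unfold cext
      split_ifs with h
      · exact tendsto_const_nhds
      · exact (hpt _).mul_const _
  have hInt : ∀ n, Integrable (fun x => innerInt μ (⇑(s n)) x) ν :=
    fun n => (key_simple hmom hinv (s n)).1
  have hb2 : Tendsto (fun n => ∫ x, innerInt μ (⇑(s n)) x ∂ν) atTop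
      (𝓝 (∫ x, innerInt μ g x ∂ν)) := by
    apply tendsto_integral_of_dominated_convergence
      (fun _ => 2 * ∫ v, ‖Matrix.toEuclideanCLM (𝕜 := ℂ) v‖ ^ 2 ∂μ)
    · exact fun n => (hInt n).aestronglyMeasurable
    · exact integrable_const _
    · intro n
      refine ae_of_all _ fun x => ?_
      unfold innerInt
      calc ‖∫ v, cext (⇑(s n)) (matVec v (unitRep x)) ∂μ‖
          ≤ ∫ v, 2 * ‖Matrix.toEuclideanCLM (𝕜 := ℂ) v‖ ^ 2 ∂μ := by
            apply norm_integral_le_of_norm_le (hmom.const_mul 2)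
            refine ae_of_all _ fun v => ?_
            refine le_trans (norm_cext_le (hsb n) _) ?_
            exact mul_le_mul_of_nonneg_left
              (pow_le_pow_left₀ (norm_nonneg _) (matVec_unit_le v x) 2) (by norm_num)
      _ = 2 * ∫ v, ‖Matrix.toEuclideanCLM (𝕜 := ℂ) v‖ ^ 2 ∂μ := integral_const_mul 2 _
    · exact ae_of_all _ ha
  have hc : Tendsto (fun n => ∫ y, s n y ∂ν) atTop (𝓝 (∫ y, g y ∂ν)) := by
    apply tendsto_integral_of_dominated_convergence (fun _ => 2)
    · exact fun n => (s n).stronglyMeasurable.aestronglyMeasurable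
    · exact integrable_const _
    · exact fun n => ae_of_all _ (hsb n)
    · exact ae_of_all _ hpt
  have heq : ∀ n, ∫ x, innerInt μ (⇑(s n)) x ∂ν = ∫ y, s n y ∂ν :=
    fun n => (key_simple hmom hinv (s n)).2
  refine tendsto_nhds_unique ?_ hc
  simpa only [heq] using hb2

end Aux

/-- If `ν` is a probability measure on `P(ℂ^k)` invariant for the kernel `Π`, then the
barycenter `ρ_ν = ∫ π_{x̂} dν(x̂)` is a fixed point of the channel `φ(ρ) = ∫ v ρ v* dμ(v)`. -/
theorem stmt5 (k : ℕ) (μ : Measure (Mat k))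
    (hmom : Integrable (fun v => ‖Matrix.toEuclideanCLM (𝕜 := ℂ) (n := Fin k) v‖ ^ 2) μ)
    (hstoch : ∀ i j, ∫ v, (vᴴ * v) i j ∂μ = (1 : Mat k) i j)
    (ν : Measure (Projectivization ℂ (Evec k))) [IsProbabilityMeasure ν]
    (hinv : ∀ S : Set (Projectivization ℂ (Evec k)), MeasurableSet S →
      ∫ x, PiKer μ x S ∂ν = (ν S).toReal)
    (ρ : Mat k) (hρ : ∀ i j, ρ i j = ∫ x, projMat x i j ∂ν) :
    ∀ i j, ∫ v, (v * ρ * vᴴ) i j ∂μ = ρ i j := by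
  intro i j
  have hg : Measurable fun x : Projectivization ℂ (Evec k) => projMat x i j :=
    measurable_projMat i j
  have hb : ∀ y, ‖projMat y i j‖ ≤ 1 := fun y => norm_projMat_le y i j
  have hkey := key_meas hmom hinv hg hb
  have hcab : ∀ a b : Fin k,
      Integrable (fun v : Mat k => v i a * (starRingEnd ℂ) (v j b)) μ := by
    intro a b
    apply hmom.mono'
    · apply Measurable.aestronglyMeasurable
      exact ((measurable_pi_apply a).comp (measurable_pi_apply i)).fun_mul
        (Complex.continuous_conj.measurable.comp ((measurable_pi_apply b).comp (measurable_pi_apply j)))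
    · refine ae_of_all _ fun v => ?_
      rw [norm_mul, RCLike.norm_conj, pow_two]
      exact mul_le_mul (entry_le v i a) (entry_le v j b) (norm_nonneg _) (norm_nonneg _)
  set C : Fin k → Fin k → ℂ := fun a b => ∫ v, v i a * (starRingEnd ℂ) (v j b) ∂μ with hCdef
  have hwker : ∀ (v : Mat k) (x : Projectivization ℂ (Evec k)),
      cext (fun y => projMat y i j) (matVec v (unitRep x))
        = ∑ a, ∑ b, projMat x a b * (v i a * (starRingEnd ℂ) (v j b)) := by
    intro v x
    have hsum : ∑ a, ∑ b, projMat x a b * (v i a * (starRingEnd ℂ) (v j b))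
        = matVec v (unitRep x) i * (starRingEnd ℂ) (matVec v (unitRep x) j) := by
      rw [matVec_apply, matVec_apply, map_sum, Finset.sum_mul_sum]
      apply Finset.sum_congr rfl; intro a _; apply Finset.sum_congr rfl; intro b _
      simp only [projMat, Matrix.of_apply, map_mul]
      ring
    rw [hsum]
    unfold cext
    split_ifs with h
    · rw [h]
      simp
    · simp only [projMat_mk h i j]
      have h2 : ((‖matVec v (unitRep x)‖ : ℝ) : ℂ) ^ 2 ≠ 0 := by
        have h3 : ‖matVec v (unitRep x)‖ ≠ 0 := norm_ne_zero_iff.2 h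
        exact pow_ne_zero _ (by exact_mod_cast h3)
      rw [div_mul_cancel₀ _ h2]
  have hInner : ∀ x, innerInt μ (fun y => projMat y i j) x
      = ∑ a, ∑ b, projMat x a b * C a b := by
    intro x
    unfold innerInt
    calc ∫ v, cext (fun y => projMat y i j) (matVec v (unitRep x)) ∂μ
        = ∫ v, ∑ a, ∑ b, projMat x a b * (v i a * (starRingEnd ℂ) (v j b)) ∂μ :=
          integral_congr_ae (ae_of_all _ fun v => hwker v x)
    _ = ∑ a, ∑ b, projMat x a b * C a b := by
        refine (integral_finset_sum _
          (fun a _ => integrable_finset_sum _ fun b _ => (hcab a b).const_mul _)).trans ?_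
        refine Finset.sum_congr rfl fun a _ => ?_
        refine (integral_finset_sum _ (fun b _ => (hcab a b).const_mul _)).trans ?_
        exact Finset.sum_congr rfl fun b _ => integral_const_mul _ _
  have hpm_int : ∀ a b : Fin k, Integrable (fun x => projMat x a b) ν := fun a b =>
    (integrable_const (1 : ℝ)).mono' (measurable_projMat a b).aestronglyMeasurable
      (ae_of_all _ fun x => norm_projMat_le x a b)
  have hLHS : ∫ x, innerInt μ (fun y => projMat y i j) x ∂ν = ∑ a, ∑ b, ρ a b * C a b := by
    calc ∫ x, innerInt μ (fun y => projMat y i j) x ∂ν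
        = ∫ x, ∑ a, ∑ b, projMat x a b * C a b ∂ν :=
          integral_congr_ae (ae_of_all _ fun x => hInner x)
    _ = ∑ a, ∑ b, ρ a b * C a b := by
        refine (integral_finset_sum _
          (fun a _ => integrable_finset_sum _ fun b _ => (hpm_int a b).mul_const _)).trans ?_
        refine Finset.sum_congr rfl fun a _ => ?_
        refine (integral_finset_sum _ (fun b _ => (hpm_int a b).mul_const _)).trans ?_
        refine Finset.sum_congr rfl fun b _ => ?_
        refine (integral_mul_const _ _).trans ?_
        rw [← hρ a b]
  have hexp : ∀ v : Mat k, (v * ρ * vᴴ) i j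
      = ∑ a, ∑ b, ρ a b * (v i a * (starRingEnd ℂ) (v j b)) := by
    intro v
    rw [Matrix.mul_apply]
    simp only [Matrix.mul_apply, Matrix.conjTranspose_apply, Finset.sum_mul]
    rw [Finset.sum_comm]
    refine Finset.sum_congr rfl fun a _ => Finset.sum_congr rfl fun b _ => ?_
    simp only [RCLike.star_def]
    ring
  calc ∫ v, (v * ρ * vᴴ) i j ∂μ
      = ∫ v, ∑ a, ∑ b, ρ a b * (v i a * (starRingEnd ℂ) (v j b)) ∂μ :=
        integral_congr_ae (ae_of_all _ fun v => hexp v)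
  _ = ∑ a, ∑ b, ρ a b * C a b := by
      refine (integral_finset_sum _
        (fun a _ => integrable_finset_sum _ fun b _ => (hcab a b).const_mul _)).trans ?_
      refine Finset.sum_congr rfl fun a _ => ?_
      refine (integral_finset_sum _ (fun b _ => (hcab a b).const_mul _)).trans ?_
      exact Finset.sum_congr rfl fun b _ => integral_const_mul _ _
  _ = ∫ x, innerInt μ (fun y => projMat y i j) x ∂ν := hLHS.symm
  _ = ∫ y, projMat y i j ∂ν := hkey
  _ = ρ i j := (hρ i j).symm
end
end

section
/- Let (W_n) be the product process W_n = V_n⋯V_1 of i.i.d.-style matrix coordinates on Ω = M_k(ℂ)^ℕ, and let P^ch be the probability measure whose restriction to n-cylinders has density (1/k) tr(W_n* W_n) with respect to μ^⊗n, where ∫ v*v dμ = Id. Then the process M_n := W_n* W_n / tr(W_n* W_n) (defined arbitrarily on the null event tr(W_n* W_n) = 0) is a matrix-valued martingale with respect to the filtration generated by the first n coordinates under P^ch. -/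
open MeasureTheory Filter Topology
open scoped ComplexOrder Matrix InnerProductSpace ENNReal
open scoped NNReal
noncomputable section
attribute [local instance] Classical.propDecidable

/-- The space `Ω = M_k(ℂ)^ℕ` of infinite sequences of matrices. -/
abbrev Om (k : ℕ) := ℕ → Mat k

/-- `Wfin (v₁, …, v_n) = v_n ⋯ v₁`. -/
def Wfin {k n : ℕ} (v : Fin n → Mat k) : Mat k := ((List.ofFn v).reverse).prod

/-- `W_n(ω) = V_n(ω) ⋯ V_1(ω)` where `V_i(ω)` is the `i`-th coordinate of `ω`. -/
def Wseq {k : ℕ} (ω : Om k) (n : ℕ) : Mat k := Wfin (fun i : Fin n => ω i)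

/-- `P` restricted to `n`-cylinders has density `tr(W_n ρ W_n*)` with respect to `μ^⊗n`. -/
def cylProp {k : ℕ} (μ : Measure (Mat k)) [SigmaFinite μ] (ρ : Mat k)
    (P : Measure (Om k)) : Prop :=
  ∀ (n : ℕ) (g : (Fin n → Mat k) → ℝ≥0∞), Measurable g →
    ∫⁻ ω, g (fun i : Fin n => ω i) ∂P
      = ∫⁻ v, g v * ENNReal.ofReal ((Wfin v * ρ * (Wfin v)ᴴ).trace.re)
          ∂(Measure.pi fun _ : Fin n => μ)

/-- The process `M_n = W_n* W_n / tr(W_n* W_n)` (equal to `0` on the null event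
`tr(W_n* W_n) = 0`). -/
def Mmat {k : ℕ} (ω : Om k) (n : ℕ) : Mat k :=
  ((Wseq ω n)ᴴ * Wseq ω n).trace⁻¹ • ((Wseq ω n)ᴴ * Wseq ω n)

/-- The filtration `O_n` generated by the first `n` coordinates of `Ω`. -/
def cylFil (k : ℕ) : Filtration ℕ (inferInstance : MeasurableSpace (Om k)) where
  seq n := MeasurableSpace.comap (fun (ω : Om k) (i : Fin n) => ω i) inferInstance
  mono' := by
    intro n m hnm
    have h : (fun (ω : Om k) (i : Fin n) => ω (i : ℕ))
        = (fun (x : Fin m → Mat k) (i : Fin n) => x (Fin.castLE hnm i))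
          ∘ (fun (ω : Om k) (i : Fin m) => ω i) := rfl
    calc MeasurableSpace.comap (fun (ω : Om k) (i : Fin n) => ω (i : ℕ)) inferInstance
        = MeasurableSpace.comap (fun (ω : Om k) (i : Fin m) => ω i)
            (MeasurableSpace.comap
              (fun (x : Fin m → Mat k) (i : Fin n) => x (Fin.castLE hnm i)) inferInstance) := by
          rw [h, MeasurableSpace.comap_comp]
      _ ≤ _ := MeasurableSpace.comap_mono
          ((measurable_pi_lambda _ fun i => measurable_pi_apply _).comap_le)
  le' n := (measurable_pi_lambda _ fun i => measurable_pi_apply _).comap_le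

namespace Stmt7Aux

variable {k : ℕ}

/-! ### Pointwise facts about `N = Wᴴ W` -/

lemma trace_N_eq (W : Mat k) :
    (Wᴴ * W).trace = ((∑ m, ∑ l, Complex.normSq (W l m) : ℝ) : ℂ) := by
  simp [Matrix.trace, Matrix.diag, Matrix.mul_apply, Matrix.conjTranspose_apply,
    ← Complex.normSq_eq_conj_mul_self]

lemma tN_nonneg (W : Mat k) : 0 ≤ (Wᴴ * W).trace.re := by
  rw [trace_N_eq]
  simp only [Complex.ofReal_re]
  exact Finset.sum_nonneg fun i _ => Finset.sum_nonneg fun j _ => Complex.normSq_nonneg _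

lemma trace_N_re (W : Mat k) : (Wᴴ * W).trace = (((Wᴴ * W).trace.re : ℝ) : ℂ) := by
  rw [trace_N_eq]; simp

lemma N_eq_zero (W : Mat k) (h : (Wᴴ * W).trace.re = 0) : Wᴴ * W = 0 := by
  have hW : W = 0 := by
    rw [trace_N_eq] at h
    simp only [Complex.ofReal_re] at h
    ext l m
    have h1 := (Finset.sum_eq_zero_iff_of_nonneg (fun i _ => Finset.sum_nonneg
      (fun j _ => Complex.normSq_nonneg _))).1 h m (Finset.mem_univ _)
    have h2 := (Finset.sum_eq_zero_iff_of_nonneg (fun j _ => Complex.normSq_nonneg _)).1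
      h1 l (Finset.mem_univ _)
    simpa [Complex.normSq_eq_zero] using h2
  simp [hW]

lemma N_entry_bound (W : Mat k) (i j : Fin k) : ‖(Wᴴ * W) i j‖ ≤ (Wᴴ * W).trace.re := by
  have hcol : ∀ m : Fin k, ∑ l, Complex.normSq (W l m) ≤ (Wᴴ * W).trace.re := by
    intro m
    rw [trace_N_eq]
    simp only [Complex.ofReal_re]
    exact Finset.single_le_sum (f := fun m => ∑ l, Complex.normSq (W l m))
      (fun i _ => Finset.sum_nonneg fun j _ => Complex.normSq_nonneg _) (Finset.mem_univ m)
  have h1 : ‖(Wᴴ * W) i j‖ ≤ ∑ l, ‖W l i‖ * ‖W l j‖ := by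
    rw [Matrix.mul_apply]
    refine (norm_sum_le _ _).trans ?_
    refine Finset.sum_le_sum fun l _ => ?_
    rw [Matrix.conjTranspose_apply, norm_mul, norm_star]
  have h2 : ∑ l, ‖W l i‖ * ‖W l j‖ ≤
      (∑ l, Complex.normSq (W l i)) / 2 + (∑ l, Complex.normSq (W l j)) / 2 := by
    calc ∑ l, ‖W l i‖ * ‖W l j‖
        ≤ ∑ l, (Complex.normSq (W l i) + Complex.normSq (W l j)) / 2 := by
          refine Finset.sum_le_sum fun l _ => ?_
          rw [Complex.normSq_eq_norm_sq, Complex.normSq_eq_norm_sq]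
          nlinarith [sq_nonneg (‖W l i‖ - ‖W l j‖)]
      _ = (∑ l, Complex.normSq (W l i)) / 2 + (∑ l, Complex.normSq (W l j)) / 2 := by
          rw [← Finset.sum_div, Finset.sum_add_distrib, add_div]
  have hi := hcol i; have hj := hcol j
  linarith

lemma M_entry_bound (W : Mat k) (i j : Fin k) :
    ‖((Wᴴ * W).trace⁻¹ • (Wᴴ * W)) i j‖ ≤ 1 := by
  set t := (Wᴴ * W).trace.re with ht
  rw [Matrix.smul_apply, smul_eq_mul, norm_mul, trace_N_re]
  rcases eq_or_ne t 0 with h0 | h0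
  · simp [← ht, h0]
  · have htpos : 0 < t := lt_of_le_of_ne (tN_nonneg W) (Ne.symm h0)
    rw [← Complex.ofReal_inv, Complex.norm_real, Real.norm_eq_abs, abs_of_nonneg (by positivity)]
    calc t⁻¹ * ‖(Wᴴ * W) i j‖ ≤ t⁻¹ * t := by
          exact mul_le_mul_of_nonneg_left (N_entry_bound W i j) (by positivity)
      _ = 1 := inv_mul_cancel₀ h0

/-! ### `Wfin` and measurability -/

lemma Wfin_zero (v : Fin 0 → Mat k) : Wfin v = 1 := by simp [Wfin]

lemma Wfin_succ {n : ℕ} (v : Fin (n + 1) → Mat k) :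
    Wfin v = v (Fin.last n) * Wfin (fun i : Fin n => v i.castSucc) := by
  rw [Wfin, Wfin, List.ofFn_succ']
  simp [List.concat_eq_append]

lemma measurable_entry_mul {α : Type*} [MeasurableSpace α] {f g : α → Mat k}
    (hf : Measurable f) (hg : Measurable g) : Measurable fun a => f a * g a := by
  apply measurable_pi_lambda _ fun i => measurable_pi_lambda _ fun j => ?_
  simp only [Matrix.mul_apply]
  exact Finset.measurable_sum _ fun l _ =>
    ((measurable_pi_apply l).comp ((measurable_pi_apply i).comp hf)).mul
      ((measurable_pi_apply j).comp ((measurable_pi_apply l).comp hg))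

lemma measurable_Wfin {n : ℕ} : Measurable (Wfin (k := k) (n := n)) := by
  induction n with
  | zero =>
    rw [show (Wfin : (Fin 0 → Mat k) → Mat k) = fun _ => 1 from funext Wfin_zero]
    exact measurable_const
  | succ n ih =>
    rw [show (Wfin : (Fin (n+1) → Mat k) → Mat k)
        = fun v => v (Fin.last n) * Wfin (fun i : Fin n => v i.castSucc) from funext Wfin_succ]
    exact measurable_entry_mul (measurable_pi_apply _)
      (ih.comp (measurable_pi_lambda _ fun i => measurable_pi_apply _))

lemma measurable_entry_conjT {α : Type*} [MeasurableSpace α] {f : α → Mat k}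
    (hf : Measurable f) : Measurable fun a => (f a)ᴴ := by
  apply measurable_pi_lambda _ fun i => measurable_pi_lambda _ fun j => ?_
  simp only [Matrix.conjTranspose_apply]
  exact continuous_star.measurable.comp ((measurable_pi_apply i).comp
    ((measurable_pi_apply j).comp hf))

lemma measurable_N {n : ℕ} : Measurable fun v : Fin n → Mat k => (Wfin v)ᴴ * Wfin v :=
  measurable_entry_mul (measurable_entry_conjT measurable_Wfin) measurable_Wfin

lemma measurable_Nentry {n : ℕ} (i j : Fin k) :
    Measurable fun v : Fin n → Mat k => ((Wfin v)ᴴ * Wfin v) i j :=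
  (measurable_pi_apply j).comp ((measurable_pi_apply i).comp measurable_N)

lemma measurable_entry_trace {α : Type*} [MeasurableSpace α] {f : α → Mat k}
    (hf : Measurable f) : Measurable fun a => (f a).trace := by
  simp only [Matrix.trace, Matrix.diag]
  exact Finset.measurable_sum _ fun l _ =>
    (measurable_pi_apply l).comp ((measurable_pi_apply l).comp hf)

lemma measurable_Ntrace {n : ℕ} :
    Measurable fun v : Fin n → Mat k => ((Wfin v)ᴴ * Wfin v).trace :=
  measurable_entry_trace measurable_N

lemma measurable_H {n : ℕ} (i j : Fin k) :
    Measurable fun v : Fin n → Mat k =>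
      (((Wfin v)ᴴ * Wfin v).trace⁻¹ • ((Wfin v)ᴴ * Wfin v)) i j := by
  simp only [Matrix.smul_apply, smul_eq_mul]
  exact measurable_Ntrace.inv.mul (measurable_Nentry i j)

lemma measurable_density {n : ℕ} (ρ : Mat k) :
    Measurable fun v : Fin n → Mat k =>
      ENNReal.ofReal ((Wfin v * ρ * (Wfin v)ᴴ).trace.re) :=
  ENNReal.measurable_ofReal.comp (Complex.measurable_re.comp (measurable_entry_trace
    (measurable_entry_mul (measurable_entry_mul measurable_Wfin measurable_const)
      (measurable_entry_conjT measurable_Wfin))))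

/-! ### The density -/

lemma density_eq (W : Mat k) :
    (W * ((k : ℂ)⁻¹ • (1 : Mat k)) * Wᴴ).trace.re = (k : ℝ)⁻¹ * (Wᴴ * W).trace.re := by
  have h1 : W * ((k : ℂ)⁻¹ • (1 : Mat k)) * Wᴴ = (k : ℂ)⁻¹ • (W * Wᴴ) := by
    rw [Matrix.mul_smul, Matrix.mul_one, Matrix.smul_mul]
  rw [h1, Matrix.trace_smul, Matrix.trace_mul_comm]
  have h2 : ((k : ℂ)⁻¹ • (Wᴴ * W).trace) = (((k : ℝ)⁻¹ : ℝ) : ℂ) * (Wᴴ * W).trace := by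
    push_cast
    rw [smul_eq_mul]
  rw [h2, Complex.re_ofReal_mul]

lemma smul_H_eq (W : Mat k) (i j : Fin k) :
    (Real.toNNReal ((k : ℝ)⁻¹ * (Wᴴ * W).trace.re) : ℝ≥0)
        • (((Wᴴ * W).trace⁻¹ • (Wᴴ * W)) i j)
      = (k : ℂ)⁻¹ * (Wᴴ * W) i j := by
  set t := (Wᴴ * W).trace.re with ht
  have htn : 0 ≤ t := tN_nonneg W
  rcases eq_or_ne t 0 with h0 | h0
  · have hN := N_eq_zero W h0
    rw [hN]
    simp
  · have hcoe : ((Real.toNNReal ((k : ℝ)⁻¹ * t) : ℝ≥0) : ℝ) = (k : ℝ)⁻¹ * t :=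
      Real.coe_toNNReal _ (by positivity)
    rw [Matrix.smul_apply, smul_eq_mul, NNReal.smul_def, Complex.real_smul, hcoe, trace_N_re,
      ← ht]
    have htC : ((t : ℂ)) ≠ 0 := by exact_mod_cast h0
    push_cast
    field_simp

variable (μ : Measure (Mat k)) [SigmaFinite μ]

lemma measurable_proj (n : ℕ) : Measurable fun (ω : Om k) (i : Fin n) => ω i :=
  measurable_pi_lambda _ fun i => measurable_pi_apply _

lemma map_pi (Pch : Measure (Om k)) (ρ : Mat k)
    (hcyl : cylProp μ ρ Pch) (n : ℕ) :
    Measure.map (fun (ω : Om k) (i : Fin n) => ω i) Pch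
      = (Measure.pi fun _ : Fin n => μ).withDensity
          (fun v => ENNReal.ofReal ((Wfin v * ρ * (Wfin v)ᴴ).trace.re)) := by
  ext s hs
  rw [Measure.map_apply (measurable_proj n) hs, withDensity_apply _ hs]
  have h := hcyl n (s.indicator 1) (measurable_one.indicator hs)
  have h1 : (∫⁻ ω, s.indicator 1 (fun i : Fin n => ω i) ∂Pch)
      = Pch ((fun (ω : Om k) (i : Fin n) => ω i) ⁻¹' s) := by
    have hpt : ∀ ω : Om k, s.indicator (1 : (Fin n → Mat k) → ℝ≥0∞) (fun i : Fin n => ω i)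
        = ((fun (ω : Om k) (i : Fin n) => ω i) ⁻¹' s).indicator (1 : Om k → ℝ≥0∞) ω := by
      intro ω
      by_cases hω : (fun i : Fin n => ω i) ∈ s <;> simp [Set.indicator, hω]
    rw [lintegral_congr hpt, lintegral_indicator (hs.preimage (measurable_proj n)) _]
    simp
  have h2 : (∫⁻ v, s.indicator 1 v * ENNReal.ofReal ((Wfin v * ρ * (Wfin v)ᴴ).trace.re)
        ∂(Measure.pi fun _ : Fin n => μ))
      = ∫⁻ v in s, ENNReal.ofReal ((Wfin v * ρ * (Wfin v)ᴴ).trace.re)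
          ∂(Measure.pi fun _ : Fin n => μ) := by
    rw [← lintegral_indicator hs _]
    congr 1
    funext v
    by_cases hv : v ∈ s <;> simp [Set.indicator, hv]
  rw [h1, h2] at h
  exact h

lemma lint_tN_ne_top (Pch : Measure (Om k)) [IsProbabilityMeasure Pch]
    (hcyl : cylProp μ ((k : ℂ)⁻¹ • (1 : Mat k)) Pch) (hk : k ≠ 0) (n : ℕ) :
    ∫⁻ v, ENNReal.ofReal (((Wfin v)ᴴ * Wfin v).trace.re)
        ∂(Measure.pi fun _ : Fin n => μ) ≠ ∞ := by
  have h := hcyl n 1 measurable_one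
  simp only [Pi.one_apply, one_mul, lintegral_const, measure_univ, mul_one] at h
  have hrw : ∀ v : Fin n → Mat k,
      ENNReal.ofReal ((Wfin v * ((k : ℂ)⁻¹ • (1 : Mat k)) * (Wfin v)ᴴ).trace.re)
        = ENNReal.ofReal ((k : ℝ)⁻¹) * ENNReal.ofReal (((Wfin v)ᴴ * Wfin v).trace.re) := by
    intro v
    rw [density_eq, ENNReal.ofReal_mul (by positivity)]
  rw [funext hrw] at h
  have hmeas : Measurable fun v : Fin n → Mat k =>
      ENNReal.ofReal (((Wfin v)ᴴ * Wfin v).trace.re) :=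
    Measurable.ennreal_ofReal (Complex.measurable_re.comp measurable_Ntrace)
  rw [lintegral_const_mul _ hmeas] at h
  intro htop
  rw [htop] at h
  have hkpos : (0 : ℝ) < (k : ℝ)⁻¹ := by
    have : 0 < (k : ℝ) := by exact_mod_cast Nat.pos_of_ne_zero hk
    positivity
  rw [ENNReal.mul_top (by simp [ne_of_gt, ENNReal.ofReal_pos.2 hkpos])] at h
  exact ENNReal.one_ne_top h

lemma integrable_Nentry (Pch : Measure (Om k)) [IsProbabilityMeasure Pch]
    (hcyl : cylProp μ ((k : ℂ)⁻¹ • (1 : Mat k)) Pch) (hk : k ≠ 0) (n : ℕ) (i j : Fin k) :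
    Integrable (fun v : Fin n → Mat k => ((Wfin v)ᴴ * Wfin v) i j)
      (Measure.pi fun _ : Fin n => μ) := by
  refine ⟨(measurable_Nentry i j).aestronglyMeasurable, ?_⟩
  rw [HasFiniteIntegral]
  refine lt_of_le_of_lt (lintegral_mono fun v => ?_)
    (lt_top_iff_ne_top.2 (lint_tN_ne_top μ Pch hcyl hk n))
  rw [← ofReal_norm_eq_enorm]
  exact ENNReal.ofReal_le_ofReal (N_entry_bound _ i j)

/-! ### Integrability of entries of `xᴴ x` and the one-step integral -/

lemma measurable_xNentry (a b : Fin k) : Measurable fun x : Mat k => (xᴴ * x) a b :=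
  (measurable_pi_apply b).comp ((measurable_pi_apply a).comp
    (measurable_entry_mul (measurable_entry_conjT measurable_id) measurable_id))

lemma integrable_diag (hstoch : ∀ i j, ∫ v, (vᴴ * v) i j ∂μ = (1 : Mat k) i j) (a : Fin k) :
    Integrable (fun x : Mat k => (xᴴ * x) a a) μ := by
  by_contra h
  have := hstoch a a
  rw [integral_undef h] at this
  simp [Matrix.one_apply] at this

lemma integrable_xNentry (hstoch : ∀ i j, ∫ v, (vᴴ * v) i j ∂μ = (1 : Mat k) i j)
    (a b : Fin k) : Integrable (fun x : Mat k => (xᴴ * x) a b) μ := by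
  refine Integrable.mono' (g := fun x => ∑ l, ((xᴴ * x) l l).re)
    (integrable_finset_sum _ fun l _ => (integrable_diag μ hstoch l).re)
    (measurable_xNentry a b).aestronglyMeasurable
    (Filter.Eventually.of_forall fun x => ?_)
  show ‖(xᴴ * x) a b‖ ≤ ∑ l, ((xᴴ * x) l l).re
  have h1 : ∑ l, ((xᴴ * x) l l).re = (xᴴ * x).trace.re := by
    rw [Matrix.trace]
    rw [Complex.re_sum]
    rfl
  rw [h1]
  exact N_entry_bound x a b

lemma integral_step (hstoch : ∀ i j, ∫ v, (vᴴ * v) i j ∂μ = (1 : Mat k) i j)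
    (W : Mat k) (i j : Fin k) :
    ∫ x, ((x * W)ᴴ * (x * W)) i j ∂μ = (Wᴴ * W) i j := by
  have hrw : ∀ x : Mat k,
      ((x * W)ᴴ * (x * W)) i j = ∑ a, ∑ b, (Wᴴ i a * W b j) * (xᴴ * x) a b := by
    intro x
    have h1 : (x * W)ᴴ * (x * W) = Wᴴ * ((xᴴ * x) * W) := by
      rw [Matrix.conjTranspose_mul, Matrix.mul_assoc, ← Matrix.mul_assoc (xᴴ)]
    rw [h1, Matrix.mul_apply]
    refine Finset.sum_congr rfl fun a _ => ?_
    rw [Matrix.mul_apply, Finset.mul_sum]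
    refine Finset.sum_congr rfl fun b _ => ?_
    ring
  rw [funext hrw]
  rw [integral_finset_sum _ fun a _ => integrable_finset_sum _ fun b _ =>
    ((integrable_xNentry μ hstoch a b).const_mul _)]
  have h2 : ∀ a, ∫ x, (∑ b, (Wᴴ i a * W b j) * (xᴴ * x) a b) ∂μ
      = ∑ b, (Wᴴ i a * W b j) * ((1 : Mat k) a b) := by
    intro a
    rw [integral_finset_sum _ fun b _ => ((integrable_xNentry μ hstoch a b).const_mul _)]
    refine Finset.sum_congr rfl fun b _ => ?_
    rw [integral_const_mul, hstoch a b]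
  rw [Finset.sum_congr rfl fun a _ => h2 a]
  rw [Matrix.mul_apply]
  refine Finset.sum_congr rfl fun a _ => ?_
  simp [Matrix.one_apply, Finset.sum_ite_eq]

/-! ### The key step identity on `μ^{n+1}` vs `μ^n` -/

lemma step_eq (Pch : Measure (Om k)) [IsProbabilityMeasure Pch]
    (hcyl : cylProp μ ((k : ℂ)⁻¹ • (1 : Mat k)) Pch) (hk : k ≠ 0)
    (hstoch : ∀ i j, ∫ v, (vᴴ * v) i j ∂μ = (1 : Mat k) i j)
    (n : ℕ) (i j : Fin k) (A : Set (Fin n → Mat k)) (hA : MeasurableSet A) :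
    ∫ v in ((fun (u : Fin (n+1) → Mat k) (i : Fin n) => u i.castSucc) ⁻¹' A),
        ((Wfin v)ᴴ * Wfin v) i j ∂(Measure.pi fun _ : Fin (n+1) => μ)
      = ∫ w in A, ((Wfin w)ᴴ * Wfin w) i j ∂(Measure.pi fun _ : Fin n => μ) := by
  have hrestr : Measurable fun (u : Fin (n+1) → Mat k) (i : Fin n) => u i.castSucc :=
    measurable_pi_lambda _ fun i => measurable_pi_apply _
  set e := MeasurableEquiv.piFinSuccAbove (fun _ : Fin (n+1) => Mat k) (Fin.last n) with he
  have hmp := measurePreserving_piFinSuccAbove (fun _ : Fin (n+1) => μ) (Fin.last n)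
  set G : Mat k × (Fin n → Mat k) → ℂ :=
    fun p => ((p.1 * Wfin p.2)ᴴ * (p.1 * Wfin p.2)) i j with hG
  have heapp : ∀ v : Fin (n+1) → Mat k,
      e v = (v (Fin.last n), fun jj : Fin n => v jj.castSucc) := by
    intro v
    have : e v = (v (Fin.last n), fun jj : Fin n => v ((Fin.last n).succAbove jj)) := rfl
    rw [this]
    congr 1
    funext jj
    rw [Fin.succAbove_last_apply]
  have hGe : ∀ v : Fin (n+1) → Mat k, G (e v) = ((Wfin v)ᴴ * Wfin v) i j := by
    intro v
    rw [heapp v, Wfin_succ v]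
  set g : Mat k × (Fin n → Mat k) → ℂ := (Prod.snd ⁻¹' A).indicator G with hg
  have hge : ∀ v : Fin (n+1) → Mat k,
      ((fun (u : Fin (n+1) → Mat k) (i : Fin n) => u i.castSucc) ⁻¹' A).indicator
        (fun v => ((Wfin v)ᴴ * Wfin v) i j) v = g (e v) := by
    intro v
    have hmem : ((fun (u : Fin (n+1) → Mat k) (i : Fin n) => u i.castSucc) ⁻¹' A) v
        ↔ (e v) ∈ Prod.snd ⁻¹' A := by
      rw [heapp v]
      exact Iff.rfl
    by_cases hv : (fun i : Fin n => v i.castSucc) ∈ A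
    · rw [Set.indicator_of_mem
          (show v ∈ (fun (u : Fin (n+1) → Mat k) (i : Fin n) => u i.castSucc) ⁻¹' A from hv),
        hg, Set.indicator_of_mem (hmem.1 hv), hGe]
    · rw [Set.indicator_of_notMem
          (show v ∉ (fun (u : Fin (n+1) → Mat k) (i : Fin n) => u i.castSucc) ⁻¹' A from hv),
        hg, Set.indicator_of_notMem (fun hc => hv (hmem.2 hc))]
  have hGint : Integrable G (μ.prod (Measure.pi fun _ : Fin n => μ)) := by
    rw [← hmp.integrable_comp_emb e.measurableEmbedding]
    have : G ∘ e = fun v : Fin (n+1) → Mat k => ((Wfin v)ᴴ * Wfin v) i j := funext hGe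
    rw [this]
    exact integrable_Nentry μ Pch hcyl hk (n+1) i j
  have hgint : Integrable g (μ.prod (Measure.pi fun _ : Fin n => μ)) :=
    hGint.indicator (hA.preimage measurable_snd)
  calc ∫ v in ((fun (u : Fin (n+1) → Mat k) (i : Fin n) => u i.castSucc) ⁻¹' A),
        ((Wfin v)ᴴ * Wfin v) i j ∂(Measure.pi fun _ : Fin (n+1) => μ)
      = ∫ v, ((fun (u : Fin (n+1) → Mat k) (i : Fin n) => u i.castSucc) ⁻¹' A).indicator
          (fun v => ((Wfin v)ᴴ * Wfin v) i j) v ∂(Measure.pi fun _ : Fin (n+1) => μ) := by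
        rw [integral_indicator (hA.preimage hrestr)]
    _ = ∫ v, g (e v) ∂(Measure.pi fun _ : Fin (n+1) => μ) := by
        exact integral_congr_ae (Filter.Eventually.of_forall hge)
    _ = ∫ p, g p ∂(μ.prod (Measure.pi fun _ : Fin n => μ)) :=
        hmp.integral_comp e.measurableEmbedding g
    _ = ∫ w, ∫ x, g (x, w) ∂μ ∂(Measure.pi fun _ : Fin n => μ) :=
        integral_prod_symm g hgint
    _ = ∫ w, A.indicator (fun w => ((Wfin w)ᴴ * Wfin w) i j) w
          ∂(Measure.pi fun _ : Fin n => μ) := by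
        refine integral_congr_ae (Filter.Eventually.of_forall fun w => ?_)
        show (∫ x, g (x, w) ∂μ) = A.indicator (fun w => ((Wfin w)ᴴ * Wfin w) i j) w
        by_cases hw : w ∈ A
        · have h1 : ∀ x : Mat k, g (x, w) = ((x * Wfin w)ᴴ * (x * Wfin w)) i j := by
            intro x
            exact Set.indicator_of_mem (by exact hw) G
          rw [show (fun x => g (x, w)) = fun x : Mat k => ((x * Wfin w)ᴴ * (x * Wfin w)) i j
            from funext h1]
          rw [integral_step μ hstoch (Wfin w) i j, Set.indicator_of_mem hw]
        · have h1 : ∀ x : Mat k, g (x, w) = 0 := by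
            intro x
            exact Set.indicator_of_notMem (by exact hw) G
          rw [show (fun x => g (x, w)) = fun _ : Mat k => (0 : ℂ) from funext h1]
          rw [integral_zero, Set.indicator_of_notMem hw]
    _ = ∫ w in A, ((Wfin w)ᴴ * Wfin w) i j ∂(Measure.pi fun _ : Fin n => μ) :=
        integral_indicator hA

/-! ### Cylinder set integrals of `M` -/

lemma cyl_integral (Pch : Measure (Om k)) [IsProbabilityMeasure Pch]
    (hcyl : cylProp μ ((k : ℂ)⁻¹ • (1 : Mat k)) Pch) (hk : k ≠ 0)
    (n : ℕ) (i j : Fin k) (B : Set (Fin n → Mat k)) (hB : MeasurableSet B) :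
    ∫ ω in ((fun (ω : Om k) (i : Fin n) => ω i) ⁻¹' B), Mmat ω n i j ∂Pch
      = (k : ℂ)⁻¹ * ∫ v in B, ((Wfin v)ᴴ * Wfin v) i j ∂(Measure.pi fun _ : Fin n => μ) := by
  have hπ := measurable_proj (k := k) n
  set H : (Fin n → Mat k) → ℂ :=
    fun v => (((Wfin v)ᴴ * Wfin v).trace⁻¹ • ((Wfin v)ᴴ * Wfin v)) i j with hHdef
  have hH : Measurable H := measurable_H i j
  have hmul : Measurable fun v : Fin n → Mat k =>
      (k : ℝ)⁻¹ * ((Wfin v)ᴴ * Wfin v).trace.re :=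
    (Complex.measurable_re.comp measurable_Ntrace).const_mul _
  have hmeasNN : Measurable fun v : Fin n → Mat k =>
      Real.toNNReal ((k : ℝ)⁻¹ * ((Wfin v)ᴴ * Wfin v).trace.re) :=
    measurable_real_toNNReal.comp hmul
  calc ∫ ω in ((fun (ω : Om k) (i : Fin n) => ω i) ⁻¹' B), Mmat ω n i j ∂Pch
      = ∫ ω, (((fun (ω : Om k) (i : Fin n) => ω i) ⁻¹' B).indicator
          (fun ω => H (fun i : Fin n => ω i))) ω ∂Pch := by
        rw [integral_indicator (hB.preimage hπ)]
        rfl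
    _ = ∫ ω, (B.indicator H) (fun i : Fin n => ω i) ∂Pch := by
        refine integral_congr_ae (Filter.Eventually.of_forall fun ω => ?_)
        show (((fun (ω : Om k) (i : Fin n) => ω i) ⁻¹' B).indicator
            (fun ω => H (fun i : Fin n => ω i))) ω = B.indicator H (fun i : Fin n => ω i)
        by_cases hω : (fun i : Fin n => ω i) ∈ B
        · rw [Set.indicator_of_mem
            (show ω ∈ (fun (ω : Om k) (i : Fin n) => ω i) ⁻¹' B from hω),
            Set.indicator_of_mem hω]
        · rw [Set.indicator_of_notMem
            (show ω ∉ (fun (ω : Om k) (i : Fin n) => ω i) ⁻¹' B from hω),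
            Set.indicator_of_notMem hω]
    _ = ∫ u, (B.indicator H) u
          ∂(Measure.map (fun (ω : Om k) (i : Fin n) => ω i) Pch) := by
        rw [integral_map hπ.aemeasurable (hH.indicator hB).aestronglyMeasurable]
    _ = ∫ u, (B.indicator H) u
          ∂((Measure.pi fun _ : Fin n => μ).withDensity (fun v =>
            (((Real.toNNReal ((k : ℝ)⁻¹ * ((Wfin v)ᴴ * Wfin v).trace.re)) : ℝ≥0) : ℝ≥0∞))) := by
        have hfun : (fun v : Fin n → Mat k =>
            ENNReal.ofReal ((Wfin v * ((k : ℂ)⁻¹ • (1 : Mat k)) * (Wfin v)ᴴ).trace.re))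
            = fun v : Fin n → Mat k =>
              (((Real.toNNReal ((k : ℝ)⁻¹ * ((Wfin v)ᴴ * Wfin v).trace.re)) : ℝ≥0) : ℝ≥0∞) := by
          funext v
          rw [density_eq]
          rfl
        rw [map_pi μ Pch _ hcyl n, hfun]
    _ = ∫ v, (Real.toNNReal ((k : ℝ)⁻¹ * ((Wfin v)ᴴ * Wfin v).trace.re) : ℝ≥0)
          • (B.indicator H) v ∂(Measure.pi fun _ : Fin n => μ) :=
        integral_withDensity_eq_integral_smul hmeasNN _
    _ = ∫ v, B.indicator (fun v => (k : ℂ)⁻¹ * ((Wfin v)ᴴ * Wfin v) i j) v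
          ∂(Measure.pi fun _ : Fin n => μ) := by
        refine integral_congr_ae (Filter.Eventually.of_forall fun v => ?_)
        show (Real.toNNReal ((k : ℝ)⁻¹ * ((Wfin v)ᴴ * Wfin v).trace.re) : ℝ≥0)
            • (B.indicator H) v
          = B.indicator (fun v => (k : ℂ)⁻¹ * ((Wfin v)ᴴ * Wfin v) i j) v
        by_cases hv : v ∈ B
        · rw [Set.indicator_of_mem hv, Set.indicator_of_mem hv, hHdef]
          exact smul_H_eq (Wfin v) i j
        · rw [Set.indicator_of_notMem hv, Set.indicator_of_notMem hv, smul_zero]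
    _ = ∫ v in B, (k : ℂ)⁻¹ * ((Wfin v)ᴴ * Wfin v) i j
          ∂(Measure.pi fun _ : Fin n => μ) := integral_indicator hB
    _ = (k : ℂ)⁻¹ * ∫ v in B, ((Wfin v)ᴴ * Wfin v) i j
          ∂(Measure.pi fun _ : Fin n => μ) := integral_const_mul _ _

end Stmt7Aux

/-- Under the stochasticity condition `∫ v*v dμ = Id`, the process
`M_n = W_n* W_n / tr(W_n* W_n)` is a (matrix-valued, i.e. entrywise) martingale with respect to
the filtration generated by the first `n` coordinates, under the measure `P^ch` whose
restriction to `n`-cylinders has density `(1/k) tr(W_n* W_n)` with respect to `μ^⊗n`. -/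
theorem stmt7 (k : ℕ) (μ : Measure (Mat k)) [SigmaFinite μ]
    (hstoch : ∀ i j, ∫ v, (vᴴ * v) i j ∂μ = (1 : Mat k) i j)
    (Pch : Measure (Om k)) [IsProbabilityMeasure Pch]
    (hcyl : cylProp μ ((k : ℂ)⁻¹ • (1 : Mat k)) Pch) :
    ∀ i j, Martingale (fun n ω => Mmat ω n i j) (cylFil k) Pch := by
  intro i j
  have hk : k ≠ 0 := i.pos.ne'
  have hbound : ∀ (n : ℕ) (ω : Om k), ‖Mmat ω n i j‖ ≤ 1 := fun n ω =>
    Stmt7Aux.M_entry_bound (Wseq ω n) i j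
  have hsm : ∀ n : ℕ, StronglyMeasurable[(cylFil k) n] (fun ω => Mmat ω n i j) := by
    intro n
    have hπm : @Measurable (Om k) (Fin n → Mat k) ((cylFil k) n) _
        (fun ω (i : Fin n) => ω i) := Measurable.of_comap_le le_rfl
    exact (((Stmt7Aux.measurable_H (n := n) i j).comp hπm)).stronglyMeasurable
  have hmeas0 : ∀ n : ℕ, AEStronglyMeasurable (fun ω => Mmat ω n i j) Pch := fun n =>
    ((hsm n).mono ((cylFil k).le n)).aestronglyMeasurable
  have hint : ∀ n : ℕ, Integrable (fun ω => Mmat ω n i j) Pch := fun n =>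
    Integrable.mono' (integrable_const (1 : ℝ)) (hmeas0 n)
      (Filter.Eventually.of_forall fun ω => hbound n ω)
  have hkey : ∀ n : ℕ, (fun ω => Mmat ω n i j)
      =ᵐ[Pch] Pch[fun ω => Mmat ω (n+1) i j | (cylFil k) n] := by
    intro n
    have hrestr : Measurable fun (u : Fin (n+1) → Mat k) (i : Fin n) => u i.castSucc :=
      measurable_pi_lambda _ fun i => measurable_pi_apply _
    refine ae_eq_condExp_of_forall_setIntegral_eq ((cylFil k).le n) (hint (n+1))
      (fun s _ _ => (hint n).integrableOn) (fun s hs _ => ?_)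
      (StronglyMeasurable.aestronglyMeasurable (hsm n))
    obtain ⟨A, hA, rfl⟩ := hs
    have hseteq : (fun (ω : Om k) (i : Fin n) => ω i) ⁻¹' A
        = (fun (ω : Om k) (i : Fin (n+1)) => ω i) ⁻¹'
          ((fun (u : Fin (n+1) → Mat k) (i : Fin n) => u i.castSucc) ⁻¹' A) := rfl
    rw [Stmt7Aux.cyl_integral μ Pch hcyl hk n i j A hA, hseteq,
      Stmt7Aux.cyl_integral μ Pch hcyl hk (n+1) i j _ (hA.preimage hrestr),
      Stmt7Aux.step_eq μ Pch hcyl hk hstoch n i j A hA]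
  refine ⟨fun n => hsm n, ?_⟩
  intro s t hst
  induction t, hst using Nat.le_induction with
  | base =>
    rw [condExp_of_stronglyMeasurable ((cylFil k).le s) (hsm s) (hint s)]
  | succ t hst ih =>
    exact ((condExp_condExp_of_le ((cylFil k).mono hst) ((cylFil k).le t)).symm.trans
      (condExp_congr_ae (hkey t).symm)).trans ih
end
end

section
/- Let ẑ_n = argmax over x̂ ∈ P(ℂ^k) of ‖W_n x‖² and ŷ_n = W_n · ẑ_n. Then for every probability measure ν on P(ℂ^k), E_ν(d(x̂_n, ŷ_n)) ≤ f(n) := ∫ ‖∧²(v_n⋯v₁)‖ dμ^⊗n, where x̂_n = W_n · x̂₀ is the quantum trajectory started from ν. -/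
open MeasureTheory Filter Topology
open scoped ComplexOrder Matrix InnerProductSpace ENNReal
noncomputable section
attribute [local instance] Classical.propDecidable

/-- `f(n) = ∫ ‖∧²(v_n ⋯ v₁)‖ dμ^⊗n(v₁,…,v_n)`. -/
def wedgeInt {k : ℕ} (μ : Measure (Mat k)) [SigmaFinite μ] (n : ℕ) : ℝ≥0∞ :=
  ∫⁻ v, ENNReal.ofReal (wedgeNorm 2 (Wfin v)) ∂(Measure.pi fun _ : Fin n => μ)

/-- `d(â, b̂) = (1 - |⟨a,b⟩|²/(‖a‖²‖b‖²))^{1/2}` on nonzero vectors, with the convention `0` if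
one of the vectors vanishes. -/
def dVec {k : ℕ} (a b : Evec k) : ℝ :=
  if a = 0 ∨ b = 0 then 0
  else Real.sqrt (1 - ‖⟪a, b⟫_ℂ‖ ^ 2 / (‖a‖ ^ 2 * ‖b‖ ^ 2))


namespace S13
variable {k : ℕ}

local notation "conj'" => starRingEnd ℂ

def iq (q : WedgeIdx k 2) : Fin k := q.1.orderEmbOfFin q.2 0
def jq (q : WedgeIdx k 2) : Fin k := q.1.orderEmbOfFin q.2 1

lemma iq_lt_jq (q : WedgeIdx k 2) : iq q < jq q :=
  (q.1.orderEmbOfFin q.2).strictMono (by decide : (0:Fin 2) < 1)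

lemma pair_eq (q : WedgeIdx k 2) : ({iq q, jq q} : Finset (Fin k)) = q.1 := by
  apply Finset.eq_of_subset_of_card_le
  · intro x hx
    rcases Finset.mem_insert.1 hx with h | h
    · subst h; exact Finset.orderEmbOfFin_mem _ _ _
    · rw [Finset.mem_singleton] at h; subst h; exact Finset.orderEmbOfFin_mem _ _ _
  · rw [q.2, Finset.card_pair (iq_lt_jq q).ne]

def fp (s t : Fin k) (h : s < t) : WedgeIdx k 2 := ⟨{s, t}, Finset.card_pair h.ne⟩

lemma emb_fp (s t : Fin k) (h : s < t) :
    ((fp s t h).1.orderEmbOfFin (fp s t h).2 : Fin 2 → Fin k) = ![s, t] := by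
  refine (Finset.orderEmbOfFin_unique _ ?_ ?_).symm
  · intro x; fin_cases x <;> simp [fp]
  · intro a b hab
    fin_cases a <;> fin_cases b <;> simp_all [h]

lemma iq_fp (s t : Fin k) (h : s < t) : iq (fp s t h) = s := by
  have := congrFun (emb_fp s t h) 0; simpa [iq] using this

lemma jq_fp (s t : Fin k) (h : s < t) : jq (fp s t h) = t := by
  have := congrFun (emb_fp s t h) 1; simpa [jq] using this

lemma sum_wedgeIdx (f : Fin k → Fin k → ℂ) :
    ∑ q : WedgeIdx k 2, f (iq q) (jq q)
      = ∑ s : Fin k, ∑ t : Fin k, if s < t then f s t else 0 := by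
  have h1 : ∑ p ∈ Finset.univ ×ˢ Finset.univ, (if p.1 < p.2 then f p.1 p.2 else 0)
      = ∑ s : Fin k, ∑ t : Fin k, (if s < t then f s t else 0) :=
    Finset.sum_product' Finset.univ Finset.univ (fun s t => if s < t then f s t else 0)
  rw [← h1, ← Finset.sum_filter]
  refine Finset.sum_bij' (fun q _ => (iq q, jq q))
    (fun p hp => fp p.1 p.2 (by simpa using (Finset.mem_filter.1 hp).2)) ?_ ?_ ?_ ?_ ?_
  · intro q _; simp [Finset.mem_filter, iq_lt_jq]
  · intro p hp; simp
  · intro q _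
    apply Subtype.ext
    exact pair_eq q
  · intro p hp
    exact Prod.ext (iq_fp _ _ _) (jq_fp _ _ _)
  · intro q _; rfl

lemma sum_split (G : Fin k → Fin k → ℂ) (hdiag : ∀ s, G s s = 0) :
    ∑ s : Fin k, ∑ t : Fin k, G s t
      = ∑ s : Fin k, ∑ t : Fin k, if s < t then G s t + G t s else 0 := by
  have h1 : ∀ s t : Fin k, G s t = (if s < t then G s t else 0) + (if t < s then G s t else 0) := by
    intro s t
    rcases lt_trichotomy s t with h | h | h
    · simp [h, not_lt_of_gt h]
    · subst h; simp [hdiag, lt_irrefl]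
    · simp [h, not_lt_of_gt h]
  calc ∑ s : Fin k, ∑ t : Fin k, G s t
      = ∑ s : Fin k, ∑ t : Fin k, ((if s < t then G s t else 0) + (if t < s then G s t else 0)) := by
        exact Finset.sum_congr rfl fun s _ => Finset.sum_congr rfl fun t _ => h1 s t
    _ = (∑ s : Fin k, ∑ t : Fin k, if s < t then G s t else 0)
        + (∑ s : Fin k, ∑ t : Fin k, if t < s then G s t else 0) := by
        simp [Finset.sum_add_distrib]
    _ = (∑ s : Fin k, ∑ t : Fin k, if s < t then G s t else 0)
        + (∑ t : Fin k, ∑ s : Fin k, if t < s then G s t else 0) := by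
        congr 1
        exact Finset.sum_comm
    _ = ∑ s : Fin k, ∑ t : Fin k, if s < t then G s t + G t s else 0 := by
        rw [← Finset.sum_add_distrib]
        refine Finset.sum_congr rfl fun s _ => ?_
        rw [← Finset.sum_add_distrib]
        refine Finset.sum_congr rfl fun t _ => ?_
        split_ifs <;> simp

lemma sum_expand4 (f1 g1 f2 g2 f3 g3 f4 g4 : Fin k → ℂ) :
    ∑ s : Fin k, ∑ t : Fin k,
        (f1 s * g1 t + f2 s * g2 t - f3 s * g3 t - f4 s * g4 t)
      = (∑ s, f1 s) * (∑ t, g1 t) + (∑ s, f2 s) * (∑ t, g2 t)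
        - (∑ s, f3 s) * (∑ t, g3 t) - (∑ s, f4 s) * (∑ t, g4 t) := by
  simp only [Finset.sum_sub_distrib, Finset.sum_add_distrib, ← Finset.mul_sum,
    ← Finset.sum_mul]

lemma sum_expand2 (f1 g1 f2 g2 : Fin k → ℂ) :
    ∑ s : Fin k, ∑ t : Fin k, (f1 s * g1 t - f2 s * g2 t)
      = (∑ s, f1 s) * (∑ t, g1 t) - (∑ s, f2 s) * (∑ t, g2 t) := by
  simp only [Finset.sum_sub_distrib, ← Finset.mul_sum, ← Finset.sum_mul]

lemma lagrange_aux (a b : Fin k → ℂ) :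
    ∑ q : WedgeIdx k 2, (a (iq q) * b (jq q) - a (jq q) * b (iq q)) *
        conj' (a (iq q) * b (jq q) - a (jq q) * b (iq q))
      = (∑ s, a s * conj' (a s)) * (∑ s, b s * conj' (b s))
        - (∑ s, conj' (a s) * b s) * conj' (∑ s, conj' (a s) * b s) := by
  set T : Fin k → Fin k → ℂ := fun s t =>
    (a s * b t - a t * b s) * conj' (a s * b t - a t * b s) with hT
  have hTsymm : ∀ s t, T t s = T s t := by
    intro s t; simp only [hT, map_sub, map_mul]; ring
  have hdiag : ∀ s, T s s = 0 := by intro s; simp only [hT, sub_self, zero_mul]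
  have hexp : ∀ s t, T s t =
      (a s * conj' (a s)) * (b t * conj' (b t)) + (b s * conj' (b s)) * (a t * conj' (a t))
        - (a s * conj' (b s)) * (conj' (a t) * b t) - (conj' (a s) * b s) * (a t * conj' (b t)) := by
    intro s t; simp only [hT, map_sub, map_mul]; ring
  have h2 : ∑ s : Fin k, ∑ t : Fin k, T s t =
      (∑ s, a s * conj' (a s)) * (∑ t, b t * conj' (b t))
      + (∑ s, b s * conj' (b s)) * (∑ t, a t * conj' (a t))
      - (∑ s, a s * conj' (b s)) * (∑ t, conj' (a t) * b t)
      - (∑ s, conj' (a s) * b s) * (∑ t, a t * conj' (b t)) := by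
    calc ∑ s : Fin k, ∑ t : Fin k, T s t
        = ∑ s : Fin k, ∑ t : Fin k,
            ((a s * conj' (a s)) * (b t * conj' (b t)) + (b s * conj' (b s)) * (a t * conj' (a t))
              - (a s * conj' (b s)) * (conj' (a t) * b t)
              - (conj' (a s) * b s) * (a t * conj' (b t))) :=
          Finset.sum_congr rfl fun s _ => Finset.sum_congr rfl fun t _ => hexp s t
      _ = _ := sum_expand4 _ _ _ _ _ _ _ _
  have h3 : ∑ s : Fin k, ∑ t : Fin k, T s t
      = 2 * ∑ q : WedgeIdx k 2, T (iq q) (jq q) := by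
    rw [sum_split T hdiag, sum_wedgeIdx fun s t => T s t, Finset.mul_sum]
    refine Finset.sum_congr rfl fun s _ => ?_
    rw [Finset.mul_sum]
    refine Finset.sum_congr rfl fun t _ => ?_
    split_ifs with h
    · rw [hTsymm]; ring
    · ring
  have hconj : conj' (∑ s, conj' (a s) * b s) = ∑ s, a s * conj' (b s) := by
    rw [map_sum]; exact Finset.sum_congr rfl fun s _ => by simp [mul_comm]
  have h4 : (2 : ℂ) * ∑ q : WedgeIdx k 2, T (iq q) (jq q)
      = 2 * ((∑ s, a s * conj' (a s)) * (∑ s, b s * conj' (b s))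
        - (∑ s, conj' (a s) * b s) * conj' (∑ s, conj' (a s) * b s)) := by
    rw [← h3, h2, hconj]; ring
  have := mul_left_cancel₀ (two_ne_zero (α := ℂ)) h4
  simpa [hT] using this

lemma cb_entry (W : Mat k) (a b : Fin k → ℂ) (q : WedgeIdx k 2) :
    ∑ r : WedgeIdx k 2, wedgeMap 2 W q r * (a (iq r) * b (jq r) - a (jq r) * b (iq r))
      = (∑ s, W (iq q) s * a s) * (∑ t, W (jq q) t * b t)
        - (∑ s, W (jq q) s * a s) * (∑ t, W (iq q) t * b t) := by
  set i := iq q; set j := jq q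
  have hw : ∀ r : WedgeIdx k 2, wedgeMap 2 W q r
      = W i (iq r) * W j (jq r) - W i (jq r) * W j (iq r) := by
    intro r
    simp only [wedgeMap, Matrix.of_apply, Matrix.det_fin_two, Matrix.submatrix_apply]
    rfl
  have h1 : ∑ r : WedgeIdx k 2, wedgeMap 2 W q r * (a (iq r) * b (jq r) - a (jq r) * b (iq r))
      = ∑ r : WedgeIdx k 2, (fun s t => (W i s * W j t - W i t * W j s) * (a s * b t - a t * b s))
          (iq r) (jq r) :=
    Finset.sum_congr rfl fun r _ => by rw [hw]
  rw [h1, sum_wedgeIdx (fun s t => (W i s * W j t - W i t * W j s) * (a s * b t - a t * b s))]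
  set G : Fin k → Fin k → ℂ := fun s t =>
    (W i s * a s) * (W j t * b t) - (W j s * a s) * (W i t * b t) with hG
  have hdiag : ∀ s, G s s = 0 := by intro s; simp only [hG]; ring
  have hstep : ∑ s : Fin k, ∑ t : Fin k, (if s < t then
        (W i s * W j t - W i t * W j s) * (a s * b t - a t * b s) else 0)
      = ∑ s : Fin k, ∑ t : Fin k, G s t := by
    rw [sum_split G hdiag]
    refine Finset.sum_congr rfl fun s _ => Finset.sum_congr rfl fun t _ => ?_
    split_ifs with h
    · simp only [hG]; ring
    · rfl
  rw [hstep]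
  exact sum_expand2 _ _ _ _

/-- The wedge of two vectors, as an element of Euclidean space indexed by `WedgeIdx k 2`. -/
def wv (a b : Evec k) : EuclideanSpace ℂ (WedgeIdx k 2) :=
  WithLp.toLp 2 (fun q => a (iq q) * b (jq q) - a (jq q) * b (iq q))

lemma norm_wv_sq (a b : Evec k) :
    ‖wv a b‖ ^ 2 = ‖a‖ ^ 2 * ‖b‖ ^ 2 - ‖⟪a, b⟫_ℂ‖ ^ 2 := by
  have key : ((‖wv a b‖ ^ 2 : ℝ) : ℂ) = ((‖a‖ ^ 2 * ‖b‖ ^ 2 - ‖⟪a, b⟫_ℂ‖ ^ 2 : ℝ) : ℂ) := by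
    have h1 : ((‖wv a b‖ ^ 2 : ℝ) : ℂ) = ∑ q : WedgeIdx k 2, (wv a b q) * conj' (wv a b q) := by
      rw [EuclideanSpace.norm_eq, Real.sq_sqrt (Finset.sum_nonneg fun q _ => sq_nonneg _)]
      push_cast
      exact Finset.sum_congr rfl fun q _ => (RCLike.mul_conj _).symm
    have h2 : ((‖a‖ ^ 2 : ℝ) : ℂ) = ∑ s, a s * conj' (a s) := by
      rw [EuclideanSpace.norm_eq, Real.sq_sqrt (Finset.sum_nonneg fun s _ => sq_nonneg _)]
      push_cast
      exact Finset.sum_congr rfl fun s _ => (RCLike.mul_conj _).symm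
    have h3 : ((‖b‖ ^ 2 : ℝ) : ℂ) = ∑ s, b s * conj' (b s) := by
      rw [EuclideanSpace.norm_eq, Real.sq_sqrt (Finset.sum_nonneg fun s _ => sq_nonneg _)]
      push_cast
      exact Finset.sum_congr rfl fun s _ => (RCLike.mul_conj _).symm
    have h4 : ⟪a, b⟫_ℂ = ∑ s, conj' (a s) * b s := by
      simp [PiLp.inner_apply, RCLike.inner_apply, mul_comm]
    have h5 : ((‖⟪a, b⟫_ℂ‖ ^ 2 : ℝ) : ℂ)
        = (∑ s, conj' (a s) * b s) * conj' (∑ s, conj' (a s) * b s) := by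
      rw [← h4, RCLike.mul_conj]
      norm_cast
    rw [h1]
    have := lagrange_aux (fun s => a s) (fun s => b s)
    push_cast
    rw [show (∑ q : WedgeIdx k 2, (wv a b q) * conj' (wv a b q))
        = ∑ q : WedgeIdx k 2, ((fun s => a s) (iq q) * (fun s => b s) (jq q)
            - (fun s => a s) (jq q) * (fun s => b s) (iq q)) *
          conj' ((fun s => a s) (iq q) * (fun s => b s) (jq q)
            - (fun s => a s) (jq q) * (fun s => b s) (iq q)) from rfl, this,
      ← h2, ← h3, ← h5]
    push_cast
    ring
  exact_mod_cast key

lemma matVec_apply (W : Mat k) (a : Evec k) (s : Fin k) :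
    matVec W a s = ∑ t, W s t * a t := by
  simp [matVec, Matrix.toEuclideanLin_apply, Matrix.mulVec, dotProduct]

lemma cb (W : Mat k) (a b : Evec k) :
    Matrix.toEuclideanLin (wedgeMap 2 W) (wv a b) = wv (matVec W a) (matVec W b) := by
  ext q
  have h1 : Matrix.toEuclideanLin (wedgeMap 2 W) (wv a b) q
      = ∑ r : WedgeIdx k 2, wedgeMap 2 W q r * (wv a b r) := by
    simp [Matrix.toEuclideanLin_apply, Matrix.mulVec, dotProduct]
  rw [h1]
  have h2 := cb_entry W (fun s => a s) (fun s => b s) q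
  simp only [wv, WithLp.ofLp_toLp]
  rw [show (∑ r : WedgeIdx k 2, wedgeMap 2 W q r * (a (iq r) * b (jq r) - a (jq r) * b (iq r)))
      = ∑ r : WedgeIdx k 2, wedgeMap 2 W q r * ((fun s => a s) (iq r) * (fun s => b s) (jq r)
        - (fun s => a s) (jq r) * (fun s => b s) (iq r)) from rfl, h2]
  rw [matVec_apply, matVec_apply, matVec_apply, matVec_apply]

lemma norm_wv_le (W : Mat k) (a b : Evec k) :
    ‖wv (matVec W a) (matVec W b)‖ ≤ wedgeNorm 2 W * ‖wv a b‖ := by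
  rw [← cb]
  have h : Matrix.toEuclideanLin (wedgeMap 2 W) (wv a b)
      = Matrix.toEuclideanCLM (𝕜 := ℂ) (wedgeMap 2 W) (wv a b) := by
    rw [← Matrix.coe_toEuclideanCLM_eq_toEuclideanLin]; rfl
  rw [h]
  exact (Matrix.toEuclideanCLM (𝕜 := ℂ) (wedgeMap 2 W)).le_opNorm _

lemma norm_unitRep (x : Projectivization ℂ (Evec k)) : ‖unitRep x‖ = 1 := by
  have h : x.rep ≠ 0 := Projectivization.rep_nonzero x
  have hn : ‖x.rep‖ ≠ 0 := norm_ne_zero_iff.2 h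
  simp only [unitRep, norm_smul, norm_inv, Complex.norm_real, Real.norm_eq_abs,
    abs_of_nonneg (norm_nonneg x.rep)]
  exact inv_mul_cancel₀ hn

lemma key (W : Mat k) (a zv : Evec k) (ha : ‖a‖ = 1) (hz : ‖zv‖ = 1)
    (hmax : ‖matVec W a‖ ≤ ‖matVec W zv‖) :
    dVec (matVec W a) (matVec W zv) * ‖matVec W a‖ ^ 2 ≤ wedgeNorm 2 W := by
  have hN : 0 ≤ wedgeNorm 2 W := norm_nonneg _
  by_cases h0 : matVec W a = 0 ∨ matVec W zv = 0
  · rw [dVec, if_pos h0, zero_mul]; exact hN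
  push_neg at h0
  set A := matVec W a with hA
  set Z := matVec W zv with hZ
  have hp : (0:ℝ) < ‖A‖ := norm_pos_iff.2 h0.1
  have hr : (0:ℝ) < ‖Z‖ := norm_pos_iff.2 h0.2
  have hwv1 : ‖wv a zv‖ ≤ 1 := by
    have h := norm_wv_sq a zv
    rw [ha, hz] at h
    nlinarith [norm_nonneg (wv a zv), sq_nonneg (‖⟪a, zv⟫_ℂ‖)]
  have hkey : ‖A‖ ^ 2 * ‖Z‖ ^ 2 - ‖⟪A, Z⟫_ℂ‖ ^ 2 ≤ (wedgeNorm 2 W) ^ 2 := by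
    rw [← norm_wv_sq A Z]
    have h1 : ‖wv A Z‖ ≤ wedgeNorm 2 W * ‖wv a zv‖ := norm_wv_le W a zv
    have h2 : wedgeNorm 2 W * ‖wv a zv‖ ≤ wedgeNorm 2 W := by
      nlinarith
    nlinarith [norm_nonneg (wv A Z)]
  have hX0 : 0 ≤ ‖A‖ ^ 2 * ‖Z‖ ^ 2 - ‖⟪A, Z⟫_ℂ‖ ^ 2 := by
    rw [← norm_wv_sq A Z]; positivity
  rw [dVec, if_neg (by push_neg; exact h0)]
  set c := ‖⟪A, Z⟫_ℂ‖ ^ 2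
  have hquot : 1 - c / (‖A‖ ^ 2 * ‖Z‖ ^ 2) = (‖A‖ ^ 2 * ‖Z‖ ^ 2 - c) / (‖A‖ ^ 2 * ‖Z‖ ^ 2) := by
    field_simp
  have hs : Real.sqrt (‖A‖ ^ 2 * ‖Z‖ ^ 2 - c) ≤ wedgeNorm 2 W := by
    calc Real.sqrt (‖A‖ ^ 2 * ‖Z‖ ^ 2 - c) ≤ Real.sqrt ((wedgeNorm 2 W) ^ 2) :=
          Real.sqrt_le_sqrt hkey
      _ = wedgeNorm 2 W := Real.sqrt_sq hN
  rw [hquot, Real.sqrt_div hX0]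
  have heq : Real.sqrt (‖A‖ ^ 2 * ‖Z‖ ^ 2) = ‖A‖ * ‖Z‖ := by
    rw [Real.sqrt_mul (sq_nonneg _), Real.sqrt_sq hp.le, Real.sqrt_sq hr.le]
  rw [heq]
  have heq2 : Real.sqrt (‖A‖ ^ 2 * ‖Z‖ ^ 2 - c) / (‖A‖ * ‖Z‖) * ‖A‖ ^ 2
      = Real.sqrt (‖A‖ ^ 2 * ‖Z‖ ^ 2 - c) * (‖A‖ / ‖Z‖) := by
    field_simp
  rw [heq2]
  calc Real.sqrt (‖A‖ ^ 2 * ‖Z‖ ^ 2 - c) * (‖A‖ / ‖Z‖) ≤ wedgeNorm 2 W * 1 :=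
        mul_le_mul hs ((div_le_one hr).2 hmax) (by positivity) hN
    _ = wedgeNorm 2 W := mul_one _

end S13

/-- Let `ẑ_n` be the maximum-likelihood estimator `argmax ‖W_n x‖²` and `ŷ_n = W_n · ẑ_n`.
For every probability measure `ν` on `P(ℂ^k)`, the expectation under `P_ν` (cylinder density
`‖W_n x₀‖² dν dμ^⊗n`) of `d(x̂_n, ŷ_n)`, where `x̂_n = W_n · x̂₀`, is at most
`f(n) = ∫ ‖∧² (v_n⋯v₁)‖ dμ^⊗n`. -/
theorem stmt13 (k : ℕ) (μ : Measure (Mat k)) [SigmaFinite μ]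
    (hstoch : ∀ i j, ∫ v, (vᴴ * v) i j ∂μ = (1 : Mat k) i j)
    (n : ℕ) (ν : Measure (Projectivization ℂ (Evec k))) [IsProbabilityMeasure ν]
    (z : (Fin n → Mat k) → Evec k)
    (hzunit : ∀ v, ‖z v‖ = 1)
    (hzmax : ∀ v, ∀ y : Evec k, ‖y‖ = 1 →
      ‖matVec (Wfin v) y‖ ≤ ‖matVec (Wfin v) (z v)‖) :
    (∫⁻ x, (∫⁻ v, ENNReal.ofReal
        (dVec (matVec (Wfin v) (unitRep x)) (matVec (Wfin v) (z v))
          * ‖matVec (Wfin v) (unitRep x)‖ ^ 2)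
      ∂(Measure.pi fun _ : Fin n => μ)) ∂ν) ≤ wedgeInt μ n := by
  have hpt : ∀ (x : Projectivization ℂ (Evec k)) (v : Fin n → Mat k),
      ENNReal.ofReal (dVec (matVec (Wfin v) (unitRep x)) (matVec (Wfin v) (z v))
        * ‖matVec (Wfin v) (unitRep x)‖ ^ 2) ≤ ENNReal.ofReal (wedgeNorm 2 (Wfin v)) :=
    fun x v => ENNReal.ofReal_le_ofReal
      (S13.key (Wfin v) (unitRep x) (z v) (S13.norm_unitRep x) (hzunit v)
        (hzmax v (unitRep x) (S13.norm_unitRep x)))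
  calc (∫⁻ x, (∫⁻ v, ENNReal.ofReal
        (dVec (matVec (Wfin v) (unitRep x)) (matVec (Wfin v) (z v))
          * ‖matVec (Wfin v) (unitRep x)‖ ^ 2)
      ∂(Measure.pi fun _ : Fin n => μ)) ∂ν)
      ≤ ∫⁻ _x, wedgeInt μ n ∂ν :=
        lintegral_mono fun x => lintegral_mono (hpt x)
    _ = wedgeInt μ n := by rw [lintegral_const, measure_univ, mul_one]
end
end
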